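/- arXiv:1911.11648 — 9 statements merged into one kernel-verified Lean document; each statement's English description precedes it below -/
import Mathlib

section
/- Let G be a finite soluble group that is not nilpotent. If every cyclic subgroup of prime-power order of G is either self-normalizing in G or 𝔑-subnormal in G, then there exist a prime p and an element x of G such that the cyclic subgroup ⟨x⟩ is a Sylow p-subgroup of G, ⟨x⟩ is self-normalizing in G, the derived subgroup G′ together with ⟨x⟩ gives a semidirect decomposition G = G′ ⋊ ⟨x⟩ (i.e. G′⟨x⟩ = G and G′ ∩ ⟨x⟩ = 1), and the subgroup G′⟨x^p⟩ is nilpotent. -/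
variable {G : Type*}

/-- `K` is a maximal subgroup of `L`: `K < L` and there is no subgroup strictly between. -/
def IsMaximalSubgroupOf [Group G] (K L : Subgroup G) : Prop :=
  K < L ∧ ∀ M : Subgroup G, K < M → M ≤ L → M = L

/-- The quotient of `L` by the normal core of `K` in `L` is nilpotent. -/
def NilpotentQuotByCore [Group G] (K L : Subgroup G) : Prop :=
  Group.IsNilpotent (↥L ⧸ (K.subgroupOf L).normalCore)

/-- The quotient of `L` by the normal core of `K` in `L` has nilpotent derived subgroup
(i.e. belongs to the formation `𝔑𝔄`). -/
def NAQuotByCore [Group G] (K L : Subgroup G) : Prop :=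
  Group.IsNilpotent ↥(commutator (↥L ⧸ (K.subgroupOf L).normalCore))

/-- `H` is `𝔑`-subnormal in `G`: `H = G` or there is a chain
`H = H₀ <· H₁ <· ... <· Hₙ = G` of maximal subgroups with each `Hᵢ/(Hᵢ₋₁)_{Hᵢ}` nilpotent. -/
def NSubnormal [Group G] (H : Subgroup G) : Prop :=
  H = ⊤ ∨ ∃ (n : ℕ) (c : Fin (n + 1) → Subgroup G),
    c 0 = H ∧ c (Fin.last n) = ⊤ ∧
    ∀ i : Fin n, IsMaximalSubgroupOf (c i.castSucc) (c i.succ) ∧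
      NilpotentQuotByCore (c i.castSucc) (c i.succ)

/-- `H` is `𝔑𝔄`-subnormal in `G`: `H = G` or there is a chain
`H = H₀ <· H₁ <· ... <· Hₙ = G` of maximal subgroups with each `Hᵢ/(Hᵢ₋₁)_{Hᵢ}`
having nilpotent derived subgroup. -/
def NASubnormal [Group G] (H : Subgroup G) : Prop :=
  H = ⊤ ∨ ∃ (n : ℕ) (c : Fin (n + 1) → Subgroup G),
    c 0 = H ∧ c (Fin.last n) = ⊤ ∧
    ∀ i : Fin n, IsMaximalSubgroupOf (c i.castSucc) (c i.succ) ∧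
      NAQuotByCore (c i.castSucc) (c i.succ)

/-- `H` is `𝔑`-abnormal in `G`: for all `K`, `L` with `H ≤ K` and `K` maximal in `L`,
the quotient `L/K_L` is not nilpotent. -/
def NAbnormal [Group G] (H : Subgroup G) : Prop :=
  ∀ K L : Subgroup G, H ≤ K → IsMaximalSubgroupOf K L → ¬ NilpotentQuotByCore K L

/-- `H` is `𝔑𝔄`-abnormal in `G`: for all `K`, `L` with `H ≤ K` and `K` maximal in `L`,
the quotient `L/K_L` does not have nilpotent derived subgroup. -/
def NAAbnormal [Group G] (H : Subgroup G) : Prop :=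
  ∀ K L : Subgroup G, H ≤ K → IsMaximalSubgroupOf K L → ¬ NAQuotByCore K L

/-- `N` is the nilpotent residual `G^𝔑` of `G`: the smallest normal subgroup
with nilpotent quotient. -/
def IsNilpotentResidual [Group G] (N : Subgroup G) : Prop :=
  ∃ hN : N.Normal,
    haveI := hN
    Group.IsNilpotent (G ⧸ N) ∧
      ∀ M : Subgroup G, ∀ hM : M.Normal,
        (haveI := hM; Group.IsNilpotent (G ⧸ M)) → N ≤ M

/-- `N` is the `𝔑𝔄`-residual `G^{𝔑𝔄}` of `G`: the smallest normal subgroup whose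
quotient has nilpotent derived subgroup. -/
def IsNAResidual [Group G] (N : Subgroup G) : Prop :=
  ∃ hN : N.Normal,
    haveI := hN
    Group.IsNilpotent ↥(commutator (G ⧸ N)) ∧
      ∀ M : Subgroup G, ∀ hM : M.Normal,
        (haveI := hM; Group.IsNilpotent ↥(commutator (G ⧸ M))) → N ≤ M

/-- `H` is an `𝔑`-projector of `G`: for every normal `N ⊴ G`, the image `HN/N` is a
maximal nilpotent subgroup of `G/N`. -/
def IsNProjector [Group G] (H : Subgroup G) : Prop :=
  ∀ N : Subgroup G, ∀ hN : N.Normal,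
    haveI := hN
    Group.IsNilpotent ↥(H.map (QuotientGroup.mk' N)) ∧
      ∀ K : Subgroup (G ⧸ N), Group.IsNilpotent ↥K →
        H.map (QuotientGroup.mk' N) ≤ K → K = H.map (QuotientGroup.mk' N)


/-! ### Auxiliary machinery -/

section Aux

open Subgroup

universe u

variable {G : Type*} [Group G]

/-- The `p`-core of `G`: the intersection of all Sylow `p`-subgroups. -/
def myPCore (p : ℕ) (G : Type*) [Group G] : Subgroup G := ⨅ P : Sylow p G, ↑P

lemma mem_myPCore {p : ℕ} {g : G} : g ∈ myPCore p G ↔ ∀ P : Sylow p G, g ∈ (P : Subgroup G) := by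
  simp [myPCore, Subgroup.mem_iInf]

lemma myPCore_isPGroup (p : ℕ) [Fact p.Prime] [Finite G] : IsPGroup p (myPCore p G) := by
  obtain ⟨P⟩ := (inferInstance : Nonempty (Sylow p G))
  exact P.isPGroup'.to_le (iInf_le _ P)

open Pointwise in
lemma myPCore_normal (p : ℕ) : (myPCore p G).Normal := by
  constructor
  intro m hm g
  rw [mem_myPCore] at hm ⊢
  intro P
  have hc := hm ((MulAut.conj g⁻¹ : MulAut G) • P)
  rw [Sylow.pointwise_smul_def, Subgroup.pointwise_smul_def] at hc
  change m ∈ Subgroup.map (MulAut.conj g⁻¹).toMonoidHom ↑P at hc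
  rw [Subgroup.mem_map] at hc
  obtain ⟨q, hq, hqe⟩ := hc
  have : g * m * g⁻¹ = q := by
    rw [← hqe]
    simp [MulAut.conj_apply]
    group
  rw [this]
  exact hq

lemma le_myPCore {p : ℕ} {N : Subgroup G} (hN : N.Normal) (hNp : IsPGroup p N) :
    N ≤ myPCore p G := by
  refine le_iInf fun P => ?_
  haveI := hN
  have h1 : IsPGroup p ((N ⊔ ↑P : Subgroup G)) := hNp.to_sup_of_normal_left P.isPGroup'
  have h2 := P.3 h1 le_sup_right
  exact le_sup_left.trans h2.le

open Pointwise in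
lemma map_myPCore_normal (p : ℕ) {K : Subgroup G} (hK : K.Normal) :
    ((myPCore p ↥K).map K.subtype).Normal := by
  constructor
  intro m hm g
  rw [Subgroup.mem_map] at hm
  obtain ⟨m', hm', rfl⟩ := hm
  rw [mem_myPCore] at hm'
  rw [Subgroup.mem_map]
  refine ⟨⟨g * ↑m' * g⁻¹, hK.conj_mem _ m'.2 g⟩, ?_, by simp [Subgroup.coe_subtype]⟩
  rw [mem_myPCore]
  intro Q
  have hc := hm' ((MulAut.conjNormal g⁻¹ : MulAut ↥K) • Q)
  rw [Sylow.pointwise_smul_def, Subgroup.pointwise_smul_def] at hc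
  change m' ∈ Subgroup.map (MulAut.conjNormal g⁻¹ : MulAut ↥K).toMonoidHom ↑Q at hc
  rw [Subgroup.mem_map] at hc
  obtain ⟨q, hq, hqe⟩ := hc
  have hqe' : (↑m' : G) = g⁻¹ * ↑q * g := by
    have : ((MulAut.conjNormal g⁻¹ : MulAut ↥K) q : G) = g⁻¹ * ↑q * g := by
      rw [MulAut.conjNormal_apply]
      group
    rw [← this]
    exact congrArg Subtype.val hqe.symm
  have hq' : (⟨g * ↑m' * g⁻¹, hK.conj_mem _ m'.2 g⟩ : ↥K) = q := by
    apply Subtype.ext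
    show g * ↑m' * g⁻¹ = ↑q
    rw [hqe']
    group
  rw [hq']
  exact hq

/-- A chain in which each term is contained in and normalized by the next. -/
def NChain {G : Type*} [Group G] (n : ℕ) (c : Fin (n + 1) → Subgroup G) : Prop :=
  ∀ i : Fin n, c i.castSucc ≤ c i.succ ∧
    ∀ g ∈ c i.succ, ∀ h ∈ c i.castSucc, g * h * g⁻¹ ∈ c i.castSucc

lemma NChain.mono {n : ℕ} {c : Fin (n + 1) → Subgroup G} (hc : NChain n c)
    {i j : Fin (n + 1)} (hij : i ≤ j) : c i ≤ c j := by
  obtain ⟨i, hi⟩ := i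
  obtain ⟨j, hj⟩ := j
  simp only [Fin.mk_le_mk] at hij
  induction j with
  | zero => cases Nat.le_zero.mp hij; exact le_rfl
  | succ j ih =>
    rcases Nat.lt_or_ge i (j+1) with hlt | hge
    · have hj' : j < n + 1 := Nat.lt_of_succ_lt hj
      refine (ih hj' (Nat.lt_succ_iff.mp hlt)).trans ?_
      have := (hc ⟨j, Nat.lt_of_succ_lt_succ hj⟩).1
      simpa using this
    · have : i = j + 1 := le_antisymm hij hge
      subst this
      exact le_rfl

lemma nchain_le_myPCore : ∀ (n : ℕ) {G : Type u} [Group G] [Finite G] (p : ℕ) [Fact p.Prime]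
    (c : Fin (n + 1) → Subgroup G), NChain n c → c (Fin.last n) = ⊤ →
    IsPGroup p (c 0) → c 0 ≤ myPCore p G := by
  intro n
  induction n with
  | zero =>
    intro G _ _ p _ c _ hlast h0
    have : c 0 = ⊤ := hlast
    rw [this] at h0 ⊢
    exact le_myPCore (by infer_instance) h0
  | succ n ih =>
    intro G _ _ p _ c hc hlast h0
    set K : Subgroup G := c (Fin.last n).castSucc with hKdef
    have hKnormal : K.Normal := by
      constructor
      intro a ha g
      have := (hc (Fin.last n)).2 g
        (by rw [show (Fin.last n).succ = Fin.last (n+1) from rfl, hlast]; trivial) a ha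
      exact this
    have hc0K : c 0 ≤ K := hc.mono (by simp [Fin.le_def])
    set c' : Fin (n + 1) → Subgroup ↥K := fun i => (c i.castSucc).subgroupOf K with hc'def
    have hc' : NChain n c' := by
      intro i
      constructor
      · intro a ha
        rw [hc'def, mem_subgroupOf] at ha ⊢
        rw [show (i.succ : Fin (n+1)).castSucc = ((i.castSucc : Fin n.succ)).succ from
          (Fin.succ_castSucc i).symm]
        exact (hc i.castSucc).1 ha
      · intro g hg a ha
        rw [hc'def, mem_subgroupOf] at hg ha ⊢
        push_cast
        refine (hc i.castSucc).2 g ?_ a ha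
        rw [show ((i.castSucc : Fin n.succ)).succ = (i.succ : Fin (n+1)).castSucc from
          Fin.succ_castSucc i]
        exact hg
    have hlast' : c' (Fin.last n) = ⊤ := by
      rw [hc'def]
      simp only []
      rw [← hKdef]
      exact subgroupOf_self K
    have h0' : IsPGroup p (c' 0) := by
      have : c' 0 = (c 0).subgroupOf K := by rw [hc'def]; norm_num
      rw [this]
      exact h0.comap_subtype
    have hle := ih p c' hc' hlast' h0'
    have hmap : c 0 ≤ (myPCore p ↥K).map K.subtype := by
      have heq : ((c 0).subgroupOf K).map K.subtype = c 0 ⊓ K := by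
        have : c' 0 = (c 0).subgroupOf K := by rw [hc'def]; norm_num
        rw [← this, hc'def]
        exact subgroupOf_map_subtype _ _
      calc c 0 = c 0 ⊓ K := (inf_of_le_left hc0K).symm
        _ = ((c 0).subgroupOf K).map K.subtype := heq.symm
        _ ≤ (myPCore p ↥K).map K.subtype := by
            apply Subgroup.map_mono
            have : (c 0).subgroupOf K = c' 0 := by rw [hc'def]; norm_num
            rw [this]; exact hle
    refine hmap.trans (le_myPCore (map_myPCore_normal p hKnormal) ?_)
    exact (myPCore_isPGroup p).map _

lemma step_normalized [Finite G] {K L : Subgroup G}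
    (hm : IsMaximalSubgroupOf K L) (hn : NilpotentQuotByCore K L) :
    ∀ g ∈ L, ∀ h ∈ K, g * h * g⁻¹ ∈ K := by
  have hKL : K ≤ L := hm.1.le
  set K' : Subgroup ↥L := K.subgroupOf L with hK'
  have hK'ne : K' ≠ ⊤ := by
    intro htop
    exact hm.1.ne (le_antisymm hKL (subgroupOf_eq_top.mp htop))
  suffices hnorm : K'.Normal by
    intro g hg a ha
    have : (⟨g, hg⟩ : ↥L) * ⟨a, hKL ha⟩ * (⟨g, hg⟩ : ↥L)⁻¹ ∈ K' :=
      hnorm.conj_mem _ (by rwa [mem_subgroupOf]) _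
    rwa [mem_subgroupOf] at this
  rcases eq_or_ne (normalizer (K' : Set ↥L)) ⊤ with htop | hne
  · exact normalizer_eq_top_iff.mp htop
  exfalso
  have hself : normalizer (K' : Set ↥L) = K' := by
    have hKle : K ≤ (normalizer (K' : Set ↥L)).map L.subtype := by
      intro a ha
      exact ⟨⟨a, hKL ha⟩, le_normalizer (by rwa [mem_subgroupOf]), rfl⟩
    rcases lt_or_eq_of_le hKle with hlt | heq
    · exact absurd (Subgroup.map_injective L.subtype_injective (by
        rw [hm.2 _ hlt (map_subtype_le _), ← MonoidHom.range_eq_map, L.range_subtype])) hne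
    · apply Subgroup.map_injective L.subtype_injective
      rw [← heq]
      rw [hK', subgroupOf_map_subtype, inf_of_le_left hKL]
  set N := K'.normalCore with hN
  have hNle : N ≤ K' := normalCore_le K'
  haveI : N.Normal := normalCore_normal K'
  set π := QuotientGroup.mk' N with hπ
  have hcomap : (K'.map π).comap π = K' := by
    rw [comap_map_eq, QuotientGroup.ker_mk', sup_of_le_left hNle]
  have hKbar_ne : K'.map π ≠ ⊤ := by
    intro htop
    apply hK'ne
    rw [← hcomap, htop, comap_top]
  haveI : Group.IsNilpotent (↥L ⧸ N) := hn
  have hNC : NormalizerCondition (↥L ⧸ N) := normalizerCondition_of_isNilpotent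
  have hlt : K'.map π < normalizer (K'.map π : Set (↥L ⧸ N)) := hNC _ (lt_top_iff_ne_top.mpr hKbar_ne)
  obtain ⟨u, hu_mem, hu_not⟩ := SetLike.exists_of_lt hlt
  obtain ⟨l, rfl⟩ := QuotientGroup.mk'_surjective N u
  have hl : l ∈ normalizer (K' : Set ↥L) := by
    rw [mem_normalizer_iff]
    intro a
    constructor
    · intro ha
      have hmem : π (l * a * l⁻¹) ∈ K'.map π := by
        rw [map_mul, map_mul, map_inv]
        exact (mem_normalizer_iff.mp hu_mem (π a)).mp (mem_map_of_mem π ha)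
      have h2 : l * a * l⁻¹ ∈ (K'.map π).comap π := hmem
      rwa [hcomap] at h2
    · intro ha
      have hinv : (π l)⁻¹ ∈ normalizer (K'.map π : Set (↥L ⧸ N)) := inv_mem hu_mem
      have hmem := (mem_normalizer_iff.mp hinv (π (l * a * l⁻¹))).mp (mem_map_of_mem π ha)
      have ha' : π a ∈ K'.map π := by
        have heq : (π l)⁻¹ * π (l * a * l⁻¹) * ((π l)⁻¹)⁻¹ = π a := by
          simp only [map_mul, map_inv]
          group
        rwa [heq] at hmem
      have h2 : a ∈ (K'.map π).comap π := ha'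
      rwa [hcomap] at h2
  rw [hself] at hl
  exact hu_not (mem_map_of_mem π hl)

lemma normal_of_commutator_le {H : Subgroup G} (h : commutator G ≤ H) : H.Normal := by
  constructor
  intro a ha g
  have hc : g * a * g⁻¹ * a⁻¹ ∈ H := by
    apply h
    rw [commutator_def]
    exact commutator_mem_commutator (mem_top g) (mem_top a)
  have := mul_mem hc ha
  simpa [mul_assoc] using this

lemma zpowers_isPGroup {y : G} {q k : ℕ} (hy : orderOf y = q ^ k) :
    IsPGroup q (zpowers y) := by
  apply IsPGroup.of_card
  rw [Nat.card_zpowers, hy]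

lemma selfnorm_primary_structure [Finite G] {y : G} {q k : ℕ} (hq : q.Prime)
    (hy : orderOf y = q ^ k) (hself : normalizer (zpowers y : Set G) = zpowers y) :
    (∃ R : Sylow q G, (R : Subgroup G) = zpowers y) ∧ commutator G ⊔ zpowers y = ⊤ := by
  haveI : Fact q.Prime := ⟨hq⟩
  obtain ⟨R, hR⟩ := (zpowers_isPGroup hy).exists_le_sylow
  set S : Subgroup G := (R : Subgroup G) with hS
  have hRy : S = zpowers y := by
    by_contra hne
    have hlt : zpowers y < S := lt_of_le_of_ne hR (fun h => hne h.symm)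
    haveI : Group.IsNilpotent ↥S := R.isPGroup'.isNilpotent
    have hNC : NormalizerCondition ↥S := normalizerCondition_of_isNilpotent
    set Z' : Subgroup ↥S := (zpowers y).subgroupOf S with hZ'
    have hZ'lt : Z' < ⊤ := by
      rw [lt_top_iff_ne_top]
      intro htop
      exact hlt.ne (le_antisymm hR (subgroupOf_eq_top.mp htop))
    obtain ⟨u, hu_mem, hu_not⟩ := SetLike.exists_of_lt (hNC Z' hZ'lt)
    have hu : (↑u : G) ∈ normalizer (zpowers y : Set G) := by
      rw [mem_normalizer_iff]
      intro a
      constructor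
      · intro ha
        have haS : a ∈ S := hR ha
        have h1 : (⟨a, haS⟩ : ↥S) ∈ Z' := by rwa [mem_subgroupOf]
        have h2 := (mem_normalizer_iff.mp hu_mem ⟨a, haS⟩).mp h1
        rw [mem_subgroupOf] at h2
        exact h2
      · intro ha
        have hwS : (↑u : G) * a * (↑u)⁻¹ ∈ S := hR ha
        have h1 : (⟨(↑u : G) * a * (↑u)⁻¹, hwS⟩ : ↥S) ∈ Z' := by rwa [mem_subgroupOf]
        have h2 := (mem_normalizer_iff.mp (inv_mem hu_mem) _).mp h1
        rw [mem_subgroupOf] at h2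
        have hcoe : ((u⁻¹ * ⟨(↑u : G) * a * (↑u)⁻¹, hwS⟩ * u⁻¹⁻¹ : ↥S) : G) = a := by
          push_cast
          group
        rwa [hcoe] at h2
    rw [hself] at hu
    exact hu_not (by rwa [mem_subgroupOf])
  refine ⟨⟨R, hRy⟩, ?_⟩
  have hN : (commutator G ⊔ zpowers y).Normal := normal_of_commutator_le le_sup_left
  haveI := hN
  have hfr := Sylow.normalizer_sup_eq_top' (N := commutator G ⊔ zpowers y) R
    (by rw [← hS, hRy]; exact le_sup_right)
  change normalizer ((R : Subgroup G) : Set G) ⊔ _ = ⊤ at hfr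
  rw [← hS, hRy, hself] at hfr
  rw [← hfr]
  rw [sup_comm (zpowers y), sup_assoc]
  congr 1
  exact (sup_idem _).symm

lemma isNilpotent_of_primary_in_core [Finite G] (T : Subgroup G)
    (hT : ∀ (q : ℕ), q.Prime → ∀ y ∈ T, (∃ k, orderOf y = q ^ k) → y ∈ myPCore q G) :
    Group.IsNilpotent ↥T := by
  refine ((isNilpotent_of_finite_tfae (G := ↥T)).out 0 3).mpr ?_
  intro p hp P
  haveI := hp
  haveI : (myPCore p G).Normal := myPCore_normal p
  set W : Subgroup ↥T := (myPCore p G).subgroupOf T with hWdef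
  have hWnormal : W.Normal := Subgroup.normal_subgroupOf
  have hWp : IsPGroup p W := (myPCore_isPGroup p).comap_subtype
  have hPW : (P : Subgroup ↥T) ≤ W := by
    intro y₀ hy₀
    rw [hWdef, mem_subgroupOf]
    obtain ⟨k, hk⟩ := P.isPGroup' ⟨y₀, hy₀⟩
    have hpow : y₀ ^ p ^ k = 1 := by
      have := congrArg (Subtype.val) hk
      push_cast at this
      exact_mod_cast this
    have hdvd : orderOf y₀ ∣ p ^ k := orderOf_dvd_of_pow_eq_one hpow
    obtain ⟨j, _, hj⟩ := (Nat.dvd_prime_pow hp.out).mp hdvd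
    refine hT p hp.out ↑y₀ y₀.2 ⟨j, ?_⟩
    rw [orderOf_coe, hj]
  have hWP := P.3 hWp hPW
  rw [← hWP]
  exact hWnormal

lemma commutator_ne_top' [Group.IsSolvable G] (hG : ¬ Group.IsNilpotent G) : commutator G ≠ ⊤ := by
  intro htop
  have hder : ∀ n, derivedSeries G n = ⊤ := by
    intro n
    induction n with
    | zero => exact derivedSeries_zero G
    | succ n ih => rw [derivedSeries_succ, ih, ← commutator_def, htop]
  obtain ⟨n, hn⟩ := (inferInstance : Group.IsSolvable G).solvable
  rw [hder n] at hn
  have : Subsingleton G := by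
    rw [← Subgroup.subsingleton_iff]
    exact subsingleton_of_bot_eq_top hn.symm
  exact hG inferInstance

lemma nsubnormal_zpowers_le_myPCore [Finite G] {y : G} {q k : ℕ} (hq : q.Prime)
    (hy : orderOf y = q ^ k) (hs : NSubnormal (zpowers y)) : zpowers y ≤ myPCore q G := by
  haveI : Fact q.Prime := ⟨hq⟩
  rcases hs with htop | ⟨n, c, hc0, hlast, hstep⟩
  · have hnormal : (zpowers y).Normal := by rw [htop]; infer_instance
    exact le_myPCore hnormal (zpowers_isPGroup hy)
  · have hch : NChain n c := fun i =>
      ⟨(hstep i).1.1.le, step_normalized (hstep i).1 (hstep i).2⟩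
    have h0 : IsPGroup q (c 0) := by rw [hc0]; exact zpowers_isPGroup hy
    have := nchain_le_myPCore n q c hch hlast h0
    rwa [hc0] at this

end Aux

theorem stmt_0 [Group G] [Finite G] [Group.IsSolvable G]
    (hG : ¬ Group.IsNilpotent G)
    (h : ∀ x : G, (∃ q k : ℕ, q.Prime ∧ orderOf x = q ^ k) →
      Subgroup.normalizer (Subgroup.zpowers x : Set G) = Subgroup.zpowers x ∨ NSubnormal (Subgroup.zpowers x)) :
    ∃ (p : ℕ) (x : G), p.Prime ∧
      (∃ P : Sylow p G, (P : Subgroup G) = Subgroup.zpowers x) ∧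
      Subgroup.normalizer (Subgroup.zpowers x : Set G) = Subgroup.zpowers x ∧
      commutator G ⊔ Subgroup.zpowers x = ⊤ ∧
      commutator G ⊓ Subgroup.zpowers x = ⊥ ∧
      Group.IsNilpotent ↥(commutator G ⊔ Subgroup.zpowers (x ^ p)) := by
  classical
  by_cases hex : ∃ x : G, x ≠ 1 ∧ (∃ q k : ℕ, q.Prime ∧ orderOf x = q ^ k) ∧
      Subgroup.normalizer (Subgroup.zpowers x : Set G) = Subgroup.zpowers x
  · obtain ⟨x, hx1, ⟨q, k, hq, hxo⟩, hself⟩ := hex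
    haveI : Fact q.Prime := ⟨hq⟩
    obtain ⟨⟨P, hPx⟩, hsup⟩ := selfnorm_primary_structure hq hxo hself
    -- Burnside's normal p-complement theorem
    have hcent : Subgroup.normalizer ((P : Subgroup G) : Set G) ≤ Subgroup.centralizer (P : Subgroup G) := by
      rw [hPx, hself]
      intro g hg
      rw [Subgroup.mem_centralizer_iff]
      intro a ha
      obtain ⟨m, rfl⟩ := Subgroup.mem_zpowers_iff.mp ha
      obtain ⟨m', rfl⟩ := Subgroup.mem_zpowers_iff.mp hg
      rw [← zpow_add, ← zpow_add, add_comm]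
    set f := MonoidHom.transferSylow P hcent with hf
    have hcomp : Subgroup.IsComplement' f.ker P :=
      MonoidHom.ker_transferSylow_isComplement' P hcent
    have hker : commutator G ≤ f.ker := by
      rw [commutator_def, Subgroup.commutator_le]
      intro g1 _ g2 _
      rw [MonoidHom.mem_ker, map_commutatorElement]
      refine commutatorElement_eq_one_iff_commute.mpr ?_
      have h1 : (↑(f g1) : G) ∈ Subgroup.zpowers x := by rw [← hPx]; exact (f g1).2
      have h2 : (↑(f g2) : G) ∈ Subgroup.zpowers x := by rw [← hPx]; exact (f g2).2
      obtain ⟨m1, hm1⟩ := Subgroup.mem_zpowers_iff.mp h1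
      obtain ⟨m2, hm2⟩ := Subgroup.mem_zpowers_iff.mp h2
      unfold Commute SemiconjBy
      rw [Subtype.ext_iff]
      push_cast
      rw [← hm1, ← hm2, ← zpow_add, ← zpow_add, add_comm]
    have hinf : commutator G ⊓ Subgroup.zpowers x = ⊥ := by
      have hdisj := hcomp.disjoint
      have : Disjoint (commutator G) (Subgroup.zpowers x) :=
        hdisj.mono hker (le_of_eq hPx.symm)
      exact disjoint_iff.mp this
    -- T = G′⟨x^q⟩ is proper
    have hTne : commutator G ⊔ Subgroup.zpowers (x ^ q) ≠ ⊤ := by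
      intro htop
      haveI : (commutator G).Normal := Subgroup.commutator_normal ⊤ ⊤
      set φ := QuotientGroup.mk' (commutator G) with hφ
      have hmapT : (commutator G ⊔ Subgroup.zpowers (x ^ q)).map φ = ⊤ := by
        rw [htop]
        exact Subgroup.map_top_of_surjective φ (QuotientGroup.mk'_surjective _)
      rw [Subgroup.map_sup, MonoidHom.map_zpowers] at hmapT
      have hcbot : (commutator G).map φ = ⊥ := by
        rw [Subgroup.map_eq_bot_iff, hφ, QuotientGroup.ker_mk']
      rw [hcbot, bot_sup_eq] at hmapT
      have hx : φ x ∈ Subgroup.zpowers (φ (x ^ q)) := by rw [hmapT]; trivial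
      set z := φ x with hz
      have hzq : φ (x ^ q) = z ^ q := by rw [hz, map_pow]
      rw [hzq] at hx
      obtain ⟨m, hm⟩ := Subgroup.mem_zpowers_iff.mp hx
      have horder : orderOf z ∣ q ^ k := by
        rw [← hxo]
        exact orderOf_map_dvd φ x
      have h1 : z ^ ((q : ℤ) * m - 1) = 1 := by
        rw [zpow_sub, zpow_one, zpow_mul, zpow_natCast]
        rw [hm]
        exact mul_inv_cancel z
      have hdz : (orderOf z : ℤ) ∣ (q : ℤ) * m - 1 := orderOf_dvd_iff_zpow_eq_one.mpr h1
      have hone : orderOf z = 1 := by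
        by_contra hne1
        obtain ⟨j, _, hj⟩ := (Nat.dvd_prime_pow hq).mp horder
        have hj1 : 1 ≤ j := by
          rcases Nat.eq_zero_or_pos j with h0 | h1'
          · rw [h0, pow_zero] at hj; exact absurd hj hne1
          · exact h1'
        have hqd : (q : ℤ) ∣ (orderOf z : ℤ) := by
          rw [hj]
          exact_mod_cast dvd_pow_self q (Nat.one_le_iff_ne_zero.mp hj1)
        have : (q : ℤ) ∣ (q : ℤ) * m - ((q : ℤ) * m - 1) := dvd_sub (Dvd.intro m rfl)
          (hqd.trans hdz)
        simp only [sub_sub_cancel] at this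
        have : (q : ℤ) ∣ 1 := this
        have hle := Int.le_of_dvd one_pos this
        have h2 := hq.two_le
        omega
      have hz1 : z = 1 := orderOf_eq_one_iff.mp hone
      have hxc : x ∈ commutator G := by
        rw [hz, hφ] at hz1
        exact (QuotientGroup.eq_one_iff x).mp hz1
      have hceq : commutator G = ⊤ := by
        rw [← hsup, sup_eq_left.mpr (Subgroup.zpowers_le.mpr hxc)]
      exact commutator_ne_top' hG hceq
    -- T is nilpotent
    have hTnil : Group.IsNilpotent ↥(commutator G ⊔ Subgroup.zpowers (x ^ q)) := by
      apply isNilpotent_of_primary_in_core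
      intro r hr y hyT ⟨j, hyo⟩
      rcases eq_or_ne y 1 with rfl | hy1
      · exact Subgroup.one_mem _
      rcases h y ⟨r, j, hr, hyo⟩ with hselfy | hsuby
      · exfalso
        obtain ⟨_, hsupy⟩ := selfnorm_primary_structure hr hyo hselfy
        apply hTne
        rw [← top_le_iff, ← hsupy]
        exact sup_le le_sup_left ((Subgroup.zpowers_le.mpr hyT).trans le_rfl)
      · exact nsubnormal_zpowers_le_myPCore hr hyo hsuby (Subgroup.mem_zpowers y)
    exact ⟨q, x, hq, ⟨P, hPx⟩, hself, hsup, hinf, hTnil⟩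
  · exfalso
    apply hG
    push_neg at hex
    have hcore : ∀ (q : ℕ), q.Prime → ∀ y ∈ (⊤ : Subgroup G), (∃ k, orderOf y = q ^ k) →
        y ∈ myPCore q G := by
      intro r hr y _ ⟨j, hyo⟩
      rcases eq_or_ne y 1 with rfl | hy1
      · exact Subgroup.one_mem _
      rcases h y ⟨r, j, hr, hyo⟩ with hselfy | hsuby
      · exact absurd hselfy (hex y hy1 ⟨r, j, hr, hyo⟩)
      · exact nsubnormal_zpowers_le_myPCore hr hyo hsuby (Subgroup.mem_zpowers y)
    have := isNilpotent_of_primary_in_core (⊤ : Subgroup G) hcore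
    exact nilpotent_of_mulEquiv Subgroup.topEquiv
end

section
/- Let G be a finite soluble group that is not nilpotent. Suppose there exist a prime p and an element x of G such that the cyclic subgroup ⟨x⟩ is a Sylow p-subgroup of G, ⟨x⟩ is self-normalizing in G, G = G′ ⋊ ⟨x⟩ (i.e. G′⟨x⟩ = G and G′ ∩ ⟨x⟩ = 1 for the derived subgroup G′), and the subgroup G′⟨x^p⟩ is nilpotent. Then every proper subgroup of G is either self-normalizing in G or 𝔑-subnormal in G. -/
variable {G : Type*}

section AuxChain
variable [Group G]

private abbrev NRel (K L : Subgroup G) : Prop :=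
  IsMaximalSubgroupOf K L ∧ NilpotentQuotByCore K L

private lemma nsubnormal_of_chain {H : Subgroup G} (h : Relation.ReflTransGen NRel H ⊤) :
    NSubnormal H := by
  induction h using Relation.ReflTransGen.head_induction_on with
  | refl => exact Or.inl rfl
  | head hrel _ ih =>
    rename_i a c _
    rcases ih with hc | ⟨n, d, h0, hl, hstep⟩
    · subst hc
      refine Or.inr ⟨1, ![a, ⊤], rfl, rfl, ?_⟩
      intro i
      fin_cases i
      simpa using hrel
    · subst h0
      refine Or.inr ⟨n + 1, Fin.cons a d, Fin.cons_zero _ _, ?_, ?_⟩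
      · rw [← Fin.succ_last, Fin.cons_succ]; exact hl
      · intro i
        refine Fin.cases ?_ ?_ i
        · simpa using hrel
        · intro j
          simpa [← Fin.succ_castSucc, Fin.cons_succ] using hstep j

private lemma chain_to_nilpotent [Finite G] :
    ∀ N : Subgroup G, Group.IsNilpotent ↥N → ∀ H : Subgroup G, H ≤ N →
      Relation.ReflTransGen (NRel (G := G)) H N := by
  intro N
  induction N using WellFoundedLT.induction with
  | ind N ih =>
    intro hnil H hHN
    rcases eq_or_lt_of_le hHN with rfl | hlt
    · exact .refl
    · obtain ⟨M, ⟨hHM, hMN⟩, hmax⟩ :=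
        (wellFounded_gt (α := Subgroup G)).has_min {M | H ≤ M ∧ M < N} ⟨H, le_rfl, hlt⟩
      have hMmax : IsMaximalSubgroupOf M N := by
        refine ⟨hMN, fun M' hMM' hM'N => ?_⟩
        by_contra hne
        exact hmax M' ⟨hHM.trans hMM'.le, lt_of_le_of_ne hM'N hne⟩ hMM'
      have hMnil : Group.IsNilpotent ↥M :=
        nilpotent_of_mulEquiv (Subgroup.subgroupOfEquivOfLe hMN.le)
      refine (ih M hMN hMnil H hHM).tail ⟨hMmax, ?_⟩
      haveI := hnil
      unfold NilpotentQuotByCore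
      infer_instance

open Pointwise in
private lemma conj_smul_zpowers (g x : G) :
    MulAut.conj g • Subgroup.zpowers x = Subgroup.zpowers (g * x * g⁻¹) := by
  rw [Subgroup.pointwise_smul_def]
  have : (MulDistribMulAction.toMonoidEnd (MulAut G) G) (MulAut.conj g)
      = (MulAut.conj g).toMonoidHom := rfl
  rw [this, MonoidHom.map_zpowers]
  simp [MulAut.conj_apply]

open Pointwise in
private lemma selfnorm_of_syl [Finite G] {p : ℕ} (hp : p.Prime) (x : G)
    (hsyl : ∃ P : Sylow p G, (P : Subgroup G) = Subgroup.zpowers x)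
    (hself : Subgroup.normalizer (Subgroup.zpowers x : Set G) = Subgroup.zpowers x)
    {K : Subgroup G} (hxK : Subgroup.zpowers x ≤ K) : Subgroup.normalizer (K : Set G) = K := by
  haveI : Fact p.Prime := ⟨hp⟩
  obtain ⟨P, hP⟩ := hsyl
  refine le_antisymm (fun n hn => ?_) Subgroup.le_normalizer
  have hPK : ↑P ≤ K := hP ▸ hxK
  have hn' : ∀ z ∈ K, n * z * n⁻¹ ∈ K := fun z hz =>
    (Subgroup.mem_normalizer_iff.mp hn z).mp hz
  have hnPK : ↑(n • P) ≤ K := by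
    rw [Sylow.coe_subgroup_smul]
    intro a ha
    rw [Subgroup.mem_pointwise_smul_iff_inv_smul_mem] at ha
    have h1 : (MulAut.conj n)⁻¹ • a = n⁻¹ * a * n := by
      simp [MulAut.smul_def]
    rw [h1] at ha
    have := hn' _ (hPK ha)
    simpa [mul_assoc] using this
  obtain ⟨k, hk⟩ := MulAction.exists_smul_eq K ((n • P).subtype hnPK) (P.subtype hPK)
  rw [Sylow.smul_subtype] at hk
  have h2 := Sylow.subtype_injective hk
  rw [Subgroup.smul_def, smul_smul] at h2
  have hmem := Sylow.smul_eq_iff_mem_normalizer.mp h2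
  change ↑k * n ∈ Subgroup.normalizer ((P : Subgroup G) : Set G) at hmem
  rw [hP, hself] at hmem
  have h3 : (↑k * n) ∈ K := hxK hmem
  have := mul_mem (inv_mem k.2) h3
  simpa [mul_assoc] using this

end AuxChain

open scoped commutatorElement in
set_option maxHeartbeats 1000000 in
theorem stmt_1 [Group G] [Finite G] [Group.IsSolvable G]
    (hG : ¬ Group.IsNilpotent G)
    (p : ℕ) (hp : p.Prime) (x : G)
    (hsyl : ∃ P : Sylow p G, (P : Subgroup G) = Subgroup.zpowers x)
    (hself : Subgroup.normalizer (Subgroup.zpowers x : Set G) = Subgroup.zpowers x)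
    (hsup : commutator G ⊔ Subgroup.zpowers x = ⊤)
    (hinf : commutator G ⊓ Subgroup.zpowers x = ⊥)
    (hnil : Group.IsNilpotent ↥(commutator G ⊔ Subgroup.zpowers (x ^ p))) :
    ∀ H : Subgroup G, H ≠ ⊤ → Subgroup.normalizer (H : Set G) = H ∨ NSubnormal H := by
  haveI : Fact p.Prime := ⟨hp⟩
  intro H hH
  set N : Subgroup G := commutator G ⊔ Subgroup.zpowers (x ^ p) with hNdef
  have hcommN : commutator G ≤ N := le_sup_left
  have hNnormal : N.Normal := by
    constructor
    intro a ha g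
    have hc : g * a * g⁻¹ * a⁻¹ ∈ N := hcommN (Subgroup.commutator_mem_commutator
      (Subgroup.mem_top g) (Subgroup.mem_top a))
    have : g * a * g⁻¹ = (g * a * g⁻¹ * a⁻¹) * a := by group
    rw [this]
    exact mul_mem hc ha
  have hxpN : x ^ p ∈ N := Subgroup.mem_sup_right (Subgroup.mem_zpowers _)
  set π : G →* G ⧸ N := QuotientGroup.mk' N with hπdef
  have hgen : Subgroup.zpowers (π x) = ⊤ := by
    have h1 : (commutator G).map π = ⊥ := by
      rw [Subgroup.map_eq_bot_iff, QuotientGroup.ker_mk']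
      exact hcommN
    have h2 : (⊤ : Subgroup (G ⧸ N)) = ((⊤ : Subgroup G)).map π := by
      rw [Subgroup.map_top_of_surjective _ (QuotientGroup.mk'_surjective N)]
    rw [← MonoidHom.map_zpowers, eq_top_iff, h2, ← hsup, Subgroup.map_sup, h1, bot_sup_eq]
  have hπxp : (π x) ^ p = 1 := by
    rw [← map_pow, ← MonoidHom.mem_ker, QuotientGroup.ker_mk']
    exact hxpN
  have hqp : ∀ q : G ⧸ N, q ^ p = 1 := by
    intro q
    obtain ⟨k, hk⟩ := Subgroup.mem_zpowers_iff.mp (hgen ▸ Subgroup.mem_top q)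
    rw [← hk, ← zpow_natCast, ← zpow_mul, mul_comm, zpow_mul, zpow_natCast, hπxp, one_zpow]
  have hstep : ∀ g : G, g ∉ N → ∀ M : Subgroup G, N ≤ M → g ∈ M → M = ⊤ := by
    intro g hg M hNM hgM
    have hπg : π g ≠ 1 := by
      simpa [hπdef, QuotientGroup.mk'_apply, QuotientGroup.eq_one_iff] using hg
    obtain ⟨k, hk⟩ := Subgroup.mem_zpowers_iff.mp (hgen ▸ Subgroup.mem_top (π g))
    have hpk : ¬ ((p : ℤ) ∣ k) := by
      rintro ⟨t, rfl⟩
      apply hπg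
      rw [← hk, zpow_mul, zpow_natCast, hπxp, one_zpow]
    obtain ⟨u, v, huv⟩ := (Nat.prime_iff_prime_int.mp hp).coprime_iff_not_dvd.mpr hpk
    have hxkM : x ^ k ∈ M := by
      have : π (x ^ k) = π g := by rw [map_zpow]; exact hk
      have hmem : (x ^ k)⁻¹ * g ∈ N := by
        rwa [hπdef, QuotientGroup.mk'_apply, QuotientGroup.mk'_apply, QuotientGroup.eq] at this
      have : x ^ k = g * ((x ^ k)⁻¹ * g)⁻¹ := by group
      rw [this]
      exact mul_mem hgM (inv_mem (hNM hmem))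
    have hxM : x ∈ M := by
      have hxpM : x ^ (p : ℤ) ∈ M := by
        rw [zpow_natCast]; exact hNM hxpN
      have : x = (x ^ (p : ℤ)) ^ u * (x ^ k) ^ v := by
        rw [← zpow_mul, ← zpow_mul, ← zpow_add, mul_comm (p : ℤ) u, mul_comm k v, huv, zpow_one]
      rw [this]
      exact mul_mem (zpow_mem hxpM u) (zpow_mem hxkM v)
    rw [eq_top_iff, ← hsup, sup_le_iff]
    exact ⟨hcommN.trans hNM, (Subgroup.zpowers_le).mpr hxM⟩
  by_cases hHN : H ≤ N
  · -- H is N-subnormal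
    right
    have hNtop : N ≠ ⊤ := by
      intro h
      apply hG
      have : Group.IsNilpotent ↥(⊤ : Subgroup G) := h ▸ hnil
      exact nilpotent_of_mulEquiv Subgroup.topEquiv
    have hmaxN : IsMaximalSubgroupOf N ⊤ := by
      refine ⟨lt_top_iff_ne_top.mpr hNtop, fun M hNM _ => ?_⟩
      obtain ⟨g, hgM, hgN⟩ := SetLike.exists_of_lt hNM
      exact hstep g hgN M hNM.le hgM
    have htopnil : NilpotentQuotByCore N ⊤ := by
      haveI hsub : (N.subgroupOf (⊤ : Subgroup G)).Normal := hNnormal.subgroupOf ⊤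
      unfold NilpotentQuotByCore
      have hcomm : ∀ a b : ↥(⊤ : Subgroup G) ⧸ (N.subgroupOf (⊤ : Subgroup G)).normalCore,
          a * b = b * a := by
        intro a b
        induction a using QuotientGroup.induction_on with
        | H a =>
        induction b using QuotientGroup.induction_on with
        | H b =>
        rw [← QuotientGroup.mk_mul, ← QuotientGroup.mk_mul, QuotientGroup.eq]
        rw [Subgroup.normalCore_eq_self, Subgroup.mem_subgroupOf]
        have : (((a * b)⁻¹ * (b * a) : ↥(⊤ : Subgroup G)) : G)
            = (↑b)⁻¹ * (↑a)⁻¹ * ↑b * ↑a := by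
          push_cast
          group
        rw [this]
        have h4 : ⁅((b : G))⁻¹, ((a : G))⁻¹⁆ ∈ commutator G :=
          Subgroup.commutator_mem_commutator (Subgroup.mem_top _) (Subgroup.mem_top _)
        have h5 : ⁅((b : G))⁻¹, ((a : G))⁻¹⁆ = (↑b)⁻¹ * (↑a)⁻¹ * ↑b * ↑a := by
          rw [commutatorElement_def]
          group
        rw [← h5]
        exact hcommN h4
      refine ⟨⟨1, ?_⟩⟩
      rw [upperCentralSeries_one, Subgroup.eq_top_iff']
      exact fun a => Subgroup.mem_center_iff.mpr fun b => hcomm b a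
    exact nsubnormal_of_chain ((chain_to_nilpotent N hnil H hHN).tail ⟨hmaxN, htopnil⟩)
  · -- H is self-normalizing
    left
    obtain ⟨h, hhH, hhN⟩ := SetLike.not_le_iff_exists.mp hHN
    have hπh : π h ≠ 1 := by
      simpa [hπdef, QuotientGroup.mk'_apply, QuotientGroup.eq_one_iff] using hhN
    have hordπh : orderOf (π h) = p := orderOf_eq_prime (hqp (π h)) hπh
    have hn0 : orderOf h ≠ 0 := (orderOf_pos h).ne'
    set m : ℕ := ordCompl[p] (orderOf h) with hmdef
    set y : G := h ^ m with hydef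
    have hyH : y ∈ H := pow_mem hhH m
    have hyN : y ∉ N := by
      intro hy
      have : π y = 1 := by
        rw [hπdef, QuotientGroup.mk'_apply, QuotientGroup.eq_one_iff]
        exact hy
      rw [hydef, map_pow] at this
      have := orderOf_dvd_of_pow_eq_one this
      rw [hordπh] at this
      exact Nat.not_dvd_ordCompl hp hn0 this
    have hyord : orderOf y = p ^ (orderOf h).factorization p := by
      rw [hydef, orderOf_pow, Nat.gcd_eq_right (Nat.ordCompl_dvd (orderOf h) p)]
      have hmpos : 0 < m := Nat.ordCompl_pos p hn0
      exact Nat.div_eq_of_eq_mul_right hmpos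
        ((Nat.ordProj_mul_ordCompl_eq_self (orderOf h) p).symm.trans (by ring_nf))
    have hpgroup : IsPGroup p ↥(Subgroup.zpowers y) :=
      IsPGroup.of_card (by rw [Nat.card_zpowers, hyord])
    obtain ⟨Q, hQle⟩ := hpgroup.exists_le_sylow
    obtain ⟨P, hP⟩ := hsyl
    obtain ⟨g, hg⟩ := MulAction.exists_smul_eq G P Q
    set x' : G := g * x * g⁻¹ with hx'def
    have hQx' : (Q : Subgroup G) = Subgroup.zpowers x' := by
      rw [← hg, Sylow.coe_subgroup_smul, hP, conj_smul_zpowers]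
    have hyQ : y ∈ Subgroup.zpowers x' := hQx' ▸ hQle (Subgroup.mem_zpowers y)
    have hx'pN : x' ^ p ∈ N := by
      have : x' ^ p = g * x ^ p * g⁻¹ := by
        rw [hx'def, conj_pow]
      rw [this]
      exact hNnormal.conj_mem _ hxpN g
    obtain ⟨k, hk⟩ := Subgroup.mem_zpowers_iff.mp hyQ
    have hpk : ¬ ((p : ℤ) ∣ k) := by
      rintro ⟨t, rfl⟩
      apply hyN
      rw [← hk, zpow_mul, zpow_natCast]
      exact zpow_mem hx'pN t
    obtain ⟨a, ha⟩ := Q.2 ⟨x', hQx' ▸ Subgroup.mem_zpowers x'⟩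
    have hx'pow : x' ^ (p ^ a) = 1 := by
      have := congrArg (Subgroup.subtype (Q : Subgroup G)) ha
      simpa using this
    have hcop : IsCoprime ((p : ℤ) ^ a) k :=
      (((Nat.prime_iff_prime_int.mp hp).coprime_iff_not_dvd.mpr hpk)).pow_left
    obtain ⟨u, v, huv⟩ := hcop
    have hx'zy : x' ∈ Subgroup.zpowers y := by
      have h1 : x' ^ ((p : ℤ) ^ a) = 1 := by
        rw [← zpow_natCast x' (p ^ a)] at hx'pow
        rw [show ((p : ℤ) ^ a) = ((p ^ a : ℕ) : ℤ) by push_cast; ring]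
        exact hx'pow
      have : x' = (x' ^ k) ^ v := by
        calc x' = x' ^ (u * (p : ℤ) ^ a + v * k) := by rw [huv, zpow_one]
        _ = (x' ^ ((p : ℤ) ^ a)) ^ u * (x' ^ k) ^ v := by
            rw [zpow_add, mul_comm u, mul_comm v, zpow_mul, zpow_mul]
        _ = (x' ^ k) ^ v := by rw [h1, one_zpow, one_mul]
      have hxk : x' ^ k ∈ Subgroup.zpowers y := by rw [hk]; exact Subgroup.mem_zpowers y
      rw [this]
      exact zpow_mem hxk v
    have hx'H : Subgroup.zpowers x' ≤ H := by
      rw [Subgroup.zpowers_le]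
      exact Subgroup.zpowers_le.mpr hyH hx'zy
    have hmapz : Subgroup.zpowers x' = (Subgroup.zpowers x).map (MulAut.conj g).toMonoidHom := by
      rw [MonoidHom.map_zpowers]
      simp [hx'def, MulAut.conj_apply]
    have hself' : Subgroup.normalizer (Subgroup.zpowers x' : Set G) = Subgroup.zpowers x' := by
      rw [hmapz, ← Subgroup.map_equiv_normalizer_eq (Subgroup.zpowers x) (MulAut.conj g), hself]
    exact selfnorm_of_syl hp x' ⟨Q, hQx'⟩ hself' hx'H
end

section
/- Let G be a finite soluble group whose derived subgroup G′ is not nilpotent. Suppose there exist a prime p and an element x of G such that the cyclic subgroup ⟨x⟩ is a Sylow p-subgroup of G, ⟨x⟩ is self-normalizing in G, G = G′ ⋊ ⟨x⟩ (i.e. G′⟨x⟩ = G and G′ ∩ ⟨x⟩ = 1), and the subgroup G′⟨x^p⟩ has nilpotent derived subgroup. Then every proper subgroup of G is either self-normalizing in G or 𝔑𝔄-subnormal in G. -/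
variable {G : Type*}

/-- Nilpotency of the derived subgroup passes to subgroups. -/
lemma aux_nilpotent_comm_of_le [Group G] {M L : Subgroup G} (h : L ≤ M)
    (hM : Group.IsNilpotent ↥(commutator ↥M)) : Group.IsNilpotent ↥(commutator ↥L) := by
  haveI := hM
  set ι : ↥L →* ↥M := Subgroup.inclusion h with hι
  have hinj : Function.Injective ι := Subgroup.inclusion_injective h
  have hle : (commutator ↥L).map ι ≤ commutator ↥M := by
    rw [commutator_def, Subgroup.map_commutator]
    exact Subgroup.commutator_mono le_top le_top
  have e1 : ↥(commutator ↥L) ≃* ↥((commutator ↥L).map ι) :=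
    Subgroup.equivMapOfInjective _ ι hinj
  have e2 : ↥(((commutator ↥L).map ι).subgroupOf (commutator ↥M)) ≃* ↥((commutator ↥L).map ι) :=
    Subgroup.subgroupOfEquivOfLe hle
  haveI : Group.IsNilpotent ↥(((commutator ↥L).map ι).subgroupOf (commutator ↥M)) :=
    Subgroup.isNilpotent _
  exact nilpotent_of_mulEquiv (e2.trans e1.symm)

/-- If the derived subgroup of `L` is nilpotent, any core-quotient of `L` is in `𝔑𝔄`. -/
lemma aux_naQuot [Group G] {K L : Subgroup G}
    (h : Group.IsNilpotent ↥(commutator ↥L)) : NAQuotByCore K L := by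
  haveI := h
  set N := (K.subgroupOf L).normalCore
  set f := QuotientGroup.mk' N with hf
  have hsurj : Function.Surjective f := QuotientGroup.mk_surjective
  have hmap : (commutator ↥L).map f = commutator (↥L ⧸ N) := by
    rw [commutator_def, Subgroup.map_commutator, commutator_def,
      Subgroup.map_top_of_surjective f hsurj]
  have : Group.IsNilpotent ↥((commutator ↥L).map f) :=
    nilpotent_of_surjective (f.subgroupMap (commutator ↥L))
      (f.subgroupMap_surjective (commutator ↥L))
  rw [hmap] at this
  exact this

/-- Prepend a maximal step to an `𝔑𝔄`-subnormal chain. -/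
lemma aux_prepend [Group G] {H K : Subgroup G} (hK : NASubnormal K)
    (hmax : IsMaximalSubgroupOf H K) (hq : NAQuotByCore H K) : NASubnormal H := by
  rcases hK with rfl | ⟨n, c, h0, hl, hstep⟩
  · right
    refine ⟨1, ![H, ⊤], rfl, rfl, ?_⟩
    intro i
    fin_cases i
    exact ⟨hmax, hq⟩
  · right
    refine ⟨n + 1, Fin.cons H c, Fin.cons_zero _ _, ?_, ?_⟩
    · rw [← Fin.succ_last, Fin.cons_succ]; exact hl
    · intro i
      induction i using Fin.cases with
      | zero =>
        rw [Fin.castSucc_zero, Fin.cons_zero, Fin.cons_succ, h0]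
        exact ⟨hmax, hq⟩
      | succ j =>
        rw [← Fin.succ_castSucc, Fin.cons_succ, Fin.cons_succ]
        exact hstep j

/-- Any proper subgroup pair in a finite group admits an intermediate maximal step. -/
lemma aux_exists_max [Group G] [Finite G] {H K0 : Subgroup G} (h : H < K0) :
    ∃ K, K ≤ K0 ∧ IsMaximalSubgroupOf H K := by
  classical
  have key : ∀ k (K1 : Subgroup G), Nat.card ↥K1 ≤ k → H < K1 →
      ∃ K, K ≤ K1 ∧ IsMaximalSubgroupOf H K := by
    intro k
    induction k with
    | zero =>
      intro K1 hc _
      have : 0 < Nat.card ↥K1 := Nat.card_pos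
      omega
    | succ k ih =>
      intro K1 hc hlt
      by_cases hmax : ∀ M' : Subgroup G, H < M' → M' ≤ K1 → M' = K1
      · exact ⟨K1, le_rfl, hlt, hmax⟩
      · push_neg at hmax
        obtain ⟨M', hHM', hM'K1, hne⟩ := hmax
        have hltK : M' < K1 := lt_of_le_of_ne hM'K1 hne
        have hcard : Nat.card ↥M' < Nat.card ↥K1 := by
          have h1 : Nat.card ↥M' ≤ Nat.card ↥K1 := Subgroup.card_le_of_le hltK.le
          have h2 : Nat.card ↥M' ≠ Nat.card ↥K1 := fun hh =>
            hltK.ne (Subgroup.eq_of_le_of_card_ge hltK.le hh.ge)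
          omega
        obtain ⟨K, hK1, hK2⟩ := ih M' (by omega) hHM'
        exact ⟨K, hK1.trans hM'K1, hK2⟩
  exact key (Nat.card ↥K0) K0 le_rfl h

/-- If `K = ⊤` and the derived subgroup of `K` is nilpotent, so is that of `G`. -/
lemma aux_comm_top [Group G] {K : Subgroup G} (hK : K = ⊤)
    (h : Group.IsNilpotent ↥(commutator ↥K)) : Group.IsNilpotent ↥(commutator G) := by
  subst hK
  haveI := h
  have hmap : Subgroup.map (Subgroup.topEquiv (G := G) : ↥(⊤ : Subgroup G) →* G)
      (commutator ↥(⊤ : Subgroup G)) = commutator G := by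
    rw [commutator_def, Subgroup.map_commutator, commutator_def,
      Subgroup.map_top_of_surjective _ (Subgroup.topEquiv (G := G)).surjective]
  have e := (Subgroup.topEquiv (G := G)).subgroupMap (commutator ↥(⊤ : Subgroup G))
  rw [hmap] at e
  exact nilpotent_of_mulEquiv e

theorem stmt_3 [Group G] [Finite G] [Group.IsSolvable G]
    (hG : ¬ Group.IsNilpotent ↥(commutator G))
    (p : ℕ) (hp : p.Prime) (x : G)
    (hsyl : ∃ P : Sylow p G, (P : Subgroup G) = Subgroup.zpowers x)
    (hself : Subgroup.normalizer (Subgroup.zpowers x : Set G) = Subgroup.zpowers x)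
    (hsup : commutator G ⊔ Subgroup.zpowers x = ⊤)
    (hinf : commutator G ⊓ Subgroup.zpowers x = ⊥)
    (hnil : Group.IsNilpotent ↥(commutator ↥(commutator G ⊔ Subgroup.zpowers (x ^ p)))) :
    ∀ H : Subgroup G, H ≠ ⊤ → Subgroup.normalizer (H : Set G) = H ∨ NASubnormal H := by
  classical
  haveI := Fact.mk hp
  obtain ⟨P, hP⟩ := hsyl
  set M : Subgroup G := commutator G ⊔ Subgroup.zpowers (x ^ p) with hMdef
  -- the order of x is a power of p
  have hxP : x ∈ (P : Subgroup G) := hP ▸ Subgroup.mem_zpowers x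
  obtain ⟨k, hxk⟩ := P.isPGroup' ⟨x, hxP⟩
  have hxk' : x ^ p ^ k = 1 := by
    have := congrArg (fun y : ↥(P : Subgroup G) => (y : G)) hxk
    simpa using this
  obtain ⟨n, -, hord⟩ := (Nat.dvd_prime_pow hp).mp (orderOf_dvd_of_pow_eq_one hxk')
  -- Key lemma: a subgroup containing the commutator subgroup and not contained in M is ⊤
  have L1 : ∀ K : Subgroup G, commutator G ≤ K → ¬ K ≤ M → K = ⊤ := by
    intro K hDK hKM
    obtain ⟨kk, hkK, hkM⟩ : ∃ kk, kk ∈ K ∧ kk ∉ M := by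
      by_contra hcon
      push_neg at hcon
      exact hKM fun g hg => hcon g hg
    have hmem : kk ∈ (↑(commutator G ⊔ Subgroup.zpowers x) : Set G) := by
      rw [hsup]; exact Set.mem_univ kk
    rw [Subgroup.normal_mul] at hmem
    obtain ⟨d, hd, y, hy, rfl⟩ := hmem
    rw [SetLike.mem_coe, Subgroup.mem_zpowers_iff] at hy
    obtain ⟨m, rfl⟩ := hy
    have hyK : x ^ m ∈ K := by
      have h2 := K.mul_mem (K.inv_mem (hDK hd)) hkK
      simpa [mul_assoc] using h2
    have hyM : x ^ m ∉ M := fun hm => hkM (M.mul_mem ((le_sup_left : commutator G ≤ M) hd) hm)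
    have hpm : ¬ (p : ℤ) ∣ m := by
      rintro ⟨t, rfl⟩
      apply hyM
      have hxm : x ^ ((p : ℤ) * t) = (x ^ p) ^ t := by
        rw [zpow_mul, zpow_natCast]
      rw [hxm]
      exact (le_sup_right : Subgroup.zpowers (x ^ p) ≤ M)
        (Subgroup.zpow_mem _ (Subgroup.mem_zpowers _) t)
    have hcop : IsCoprime m ((p : ℤ) ^ n) := by
      have hpp : Prime (p : ℤ) := Nat.prime_iff_prime_int.mp hp
      exact ((hpp.coprime_iff_not_dvd.mpr hpm).symm).pow_right
    obtain ⟨a, b, hab⟩ := hcop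
    have hx1 : x ^ ((p : ℤ) ^ n) = 1 := by
      have : ((p : ℤ) ^ n) = ((p ^ n : ℕ) : ℤ) := by push_cast; ring
      rw [this, zpow_natCast, ← hord, pow_orderOf_eq_one]
    have hxmem : x ∈ Subgroup.zpowers (x ^ m) := by
      have hcomp : (x ^ m) ^ a * (x ^ ((p : ℤ) ^ n)) ^ b = x := by
        rw [← zpow_mul, ← zpow_mul, ← zpow_add, mul_comm m a, mul_comm ((p:ℤ)^n) b, hab, zpow_one]
      rw [hx1, one_zpow, mul_one] at hcomp
      have hmem2 : (x ^ m) ^ a ∈ Subgroup.zpowers (x ^ m) :=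
        Subgroup.zpow_mem (Subgroup.zpowers (x ^ m)) (Subgroup.mem_zpowers _) a
      rwa [hcomp] at hmem2
    have hzxK : Subgroup.zpowers x ≤ K := by
      rw [Subgroup.zpowers_le]
      exact (Subgroup.zpowers_le.mpr hyK) hxmem
    rw [eq_top_iff, ← hsup]
    exact sup_le hDK hzxK
  -- M is a proper subgroup
  have hMne : M ≠ ⊤ := fun hMtop => hG (aux_comm_top hMtop hnil)
  -- M is maximal in ⊤
  have hMmax : IsMaximalSubgroupOf M ⊤ :=
    ⟨lt_top_iff_ne_top.mpr hMne, fun K hK _ => L1 K (le_sup_left.trans hK.le) hK.not_ge⟩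
  -- NAQuotByCore M ⊤
  have hMna : NAQuotByCore M ⊤ := by
    have hcsub : commutator ↥(⊤ : Subgroup G) ≤ M.subgroupOf ⊤ := by
      rw [Subgroup.subgroupOf, ← Subgroup.map_le_iff_le_comap, commutator_def,
        Subgroup.map_commutator]
      rw [← MonoidHom.range_eq_map, Subgroup.range_subtype]
      exact le_sup_left
    have hcore : commutator ↥(⊤ : Subgroup G) ≤ (M.subgroupOf ⊤).normalCore :=
      Subgroup.normal_le_normalCore.mpr hcsub
    have hbot : commutator (↥(⊤ : Subgroup G) ⧸ (M.subgroupOf ⊤).normalCore) = ⊥ := by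
      rw [eq_bot_iff, commutator_def, Subgroup.commutator_le]
      intro g1 _ g2 _
      rw [Subgroup.mem_bot]
      induction g1 using QuotientGroup.induction_on with | H a =>
      induction g2 using QuotientGroup.induction_on with | H b =>
      open scoped commutatorElement in
      have hmk : ⁅(QuotientGroup.mk a : ↥(⊤ : Subgroup G) ⧸ (M.subgroupOf ⊤).normalCore),
          (QuotientGroup.mk b : ↥(⊤ : Subgroup G) ⧸ (M.subgroupOf ⊤).normalCore)⁆ =
          (QuotientGroup.mk ⁅a, b⁆ : ↥(⊤ : Subgroup G) ⧸ (M.subgroupOf ⊤).normalCore) := by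
        simp [commutatorElement_def]
      rw [hmk, QuotientGroup.eq_one_iff]
      exact hcore (Subgroup.commutator_mem_commutator (Subgroup.mem_top a) (Subgroup.mem_top b))
    show Group.IsNilpotent ↥(commutator (↥(⊤ : Subgroup G) ⧸ (M.subgroupOf ⊤).normalCore))
    rw [hbot]
    infer_instance
  -- M is NA-subnormal
  have hMsub : NASubnormal M := by
    right
    refine ⟨1, ![M, ⊤], rfl, rfl, ?_⟩
    intro i
    fin_cases i
    exact ⟨hMmax, hMna⟩
  -- Case A: every subgroup of M is NA-subnormal
  have caseA : ∀ (k : ℕ) (H : Subgroup G), H ≤ M → Nat.card ↥M - Nat.card ↥H ≤ k →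
      NASubnormal H := by
    intro k
    induction k with
    | zero =>
      intro H hle hcard
      have hpos : 0 < Nat.card ↥H := Nat.card_pos
      have : H = M := Subgroup.eq_of_le_of_card_ge hle (by omega)
      exact this ▸ hMsub
    | succ k ih =>
      intro H hle hcard
      by_cases hHM : H = M
      · exact hHM ▸ hMsub
      · have hlt : H < M := lt_of_le_of_ne hle hHM
        obtain ⟨K, hKM, hmax⟩ := aux_exists_max hlt
        have hcardlt : Nat.card ↥H < Nat.card ↥K := by
          have h1 : Nat.card ↥H ≤ Nat.card ↥K := Subgroup.card_le_of_le hmax.1.le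
          have h2 : Nat.card ↥H ≠ Nat.card ↥K := fun hh =>
            hmax.1.ne (Subgroup.eq_of_le_of_card_ge hmax.1.le hh.ge)
          omega
        have hcardK : Nat.card ↥K ≤ Nat.card ↥M := Subgroup.card_le_of_le hKM
        have hKsub : NASubnormal K := ih K hKM (by omega)
        exact aux_prepend hKsub hmax (aux_naQuot (aux_nilpotent_comm_of_le hKM hnil))
  intro H hHtop
  by_cases hHM : H ≤ M
  · exact Or.inr (caseA _ H hHM le_rfl)
  left
  -- `H` together with the commutator subgroup generates `G`
  have hHD : H ⊔ commutator G = ⊤ :=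
    L1 _ le_sup_right (fun hc => hHM (le_sup_left.trans hc))
  -- `p` does not divide the order of the commutator subgroup
  have hpD : ¬ p ∣ Nat.card ↥(commutator G) := by
    intro hdvd
    obtain ⟨g, hg⟩ := exists_prime_orderOf_dvd_card' p hdvd
    have hgord : orderOf (g : G) = p := by
      rw [← hg]
      exact orderOf_injective (commutator G).subtype (Subgroup.subtype_injective _) g
    have hg1 : (g : G) ≠ 1 := by
      intro h1
      rw [h1, orderOf_one] at hgord
      exact hp.one_lt.ne hgord
    have hpg : IsPGroup p (Subgroup.zpowers (g : G)) :=
      IsPGroup.of_card (by rw [Nat.card_zpowers, hgord, pow_one])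
    obtain ⟨Q, hQ⟩ := hpg.exists_le_sylow
    obtain ⟨h, hh⟩ := MulAction.exists_smul_eq G Q P
    have hgQ : (g : G) ∈ (Q : Subgroup G) := hQ (Subgroup.mem_zpowers _)
    have hconjP : h * g * h⁻¹ ∈ (P : Subgroup G) := by
      rw [← hh, Sylow.coe_subgroup_smul, Subgroup.mem_pointwise_smul_iff_inv_smul_mem]
      have hcalc : (MulAut.conj h)⁻¹ • (h * (g : G) * h⁻¹) = (g : G) := by
        simp [MulAut.smul_def]
        group
      rw [hcalc]
      exact hgQ
    have hconjD : h * (g : G) * h⁻¹ ∈ commutator G :=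
      (Subgroup.commutator_normal ⊤ ⊤).conj_mem _ g.2 h
    have hmemb : h * (g : G) * h⁻¹ ∈ commutator G ⊓ Subgroup.zpowers x :=
      ⟨hconjD, by rw [← hP]; exact hconjP⟩
    rw [hinf, Subgroup.mem_bot] at hmemb
    apply hg1
    have h3 := congrArg (fun z => h⁻¹ * z * h) hmemb
    simpa [mul_assoc] using h3
  have hDcard0 : Nat.card ↥(commutator G) ≠ 0 := Nat.card_pos.ne'
  have hcardG0 : Nat.card G ≠ 0 := Nat.card_pos.ne'
  have hcardH0 : Nat.card ↥H ≠ 0 := Nat.card_pos.ne'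
  -- the quotient by the commutator subgroup has order p ^ n
  have hDindex : Nat.card (G ⧸ commutator G) = p ^ n := by
    set φ := QuotientGroup.mk' (commutator G) with hφ
    set ψ := φ.comp (Subgroup.zpowers x).subtype with hψ
    have hrange : ψ.range = ⊤ := by
      rw [hψ, MonoidHom.range_comp, Subgroup.range_subtype]
      have hmap : Subgroup.map φ (commutator G ⊔ Subgroup.zpowers x) = ⊤ := by
        rw [hsup, Subgroup.map_top_of_surjective _ QuotientGroup.mk_surjective]
      rw [Subgroup.map_sup, QuotientGroup.map_mk'_self, bot_sup_eq] at hmap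
      exact hmap
    have hker : Function.Injective ψ := by
      rw [← MonoidHom.ker_eq_bot_iff, eq_bot_iff]
      intro a ha
      rw [MonoidHom.mem_ker] at ha
      have h1 : (a : G) ∈ commutator G := by
        rw [← QuotientGroup.ker_mk' (commutator G)]
        exact ha
      have h2 : (a : G) ∈ commutator G ⊓ Subgroup.zpowers x := ⟨h1, a.2⟩
      rw [hinf, Subgroup.mem_bot] at h2
      rw [Subgroup.mem_bot]
      exact Subtype.ext h2
    have hbij : Function.Bijective ψ := ⟨hker, MonoidHom.range_eq_top.mp hrange⟩
    rw [← Nat.card_congr (Equiv.ofBijective ψ hbij), Nat.card_zpowers, hord]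
  have hfactG : (Nat.card G).factorization p = n := by
    have hcm : Nat.card ↥(commutator G) * p ^ n = Nat.card G := by
      rw [← hDindex]
      have h4 := Subgroup.card_mul_index (commutator G)
      rw [Subgroup.index_eq_card] at h4
      exact h4
    rw [← hcm, Nat.factorization_mul hDcard0 (pow_ne_zero n hp.pos.ne')]
    simp [Nat.factorization_eq_zero_of_not_dvd hpD, Nat.factorization_pow, hp.factorization]
  have hpnH : p ^ n ∣ Nat.card ↥H := by
    set φ := QuotientGroup.mk' (commutator G) with hφ
    have hsurj2 : Function.Surjective (φ.comp H.subtype) := by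
      rw [← MonoidHom.range_eq_top, MonoidHom.range_comp, Subgroup.range_subtype]
      have hmap : Subgroup.map φ (H ⊔ commutator G) = ⊤ := by
        rw [hHD, Subgroup.map_top_of_surjective _ QuotientGroup.mk_surjective]
      rw [Subgroup.map_sup, QuotientGroup.map_mk'_self, sup_bot_eq] at hmap
      exact hmap
    have h5 := Subgroup.card_dvd_of_surjective (φ.comp H.subtype) hsurj2
    rwa [hDindex] at h5
  have hfactH : (Nat.card ↥H).factorization p = n := by
    have hle : (Nat.card ↥H).factorization p ≤ n := by
      rw [← hfactG]
      exact (Nat.factorization_le_iff_dvd hcardH0 hcardG0).mpr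
        (Subgroup.card_subgroup_dvd_card H) p
    have hge : n ≤ (Nat.card ↥H).factorization p :=
      (Nat.Prime.pow_dvd_iff_le_factorization hp hcardH0).mp hpnH
    omega
  -- a Sylow p-subgroup of H is a Sylow p-subgroup of G
  obtain ⟨Q⟩ : Nonempty (Sylow p ↥H) := inferInstance
  have hQcard : Nat.card ↥((Q : Subgroup ↥H).map H.subtype) = p ^ n := by
    rw [← Nat.card_congr
      (Subgroup.equivMapOfInjective (Q : Subgroup ↥H) H.subtype
        (Subgroup.subtype_injective _)).toEquiv]
    rw [Q.card_eq_multiplicity, hfactH]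
  obtain ⟨R, hQR⟩ := (Q.isPGroup'.map H.subtype).exists_le_sylow
  have hRcard : Nat.card ↥(R : Subgroup G) = p ^ n := by
    rw [R.card_eq_multiplicity, hfactG]
  have hReq : (Q : Subgroup ↥H).map H.subtype = R :=
    Subgroup.eq_of_le_of_card_ge hQR (by rw [hRcard, hQcard])
  have hRH : (R : Subgroup G) ≤ H := hReq ▸ Subgroup.map_subtype_le _
  -- R is self-normalizing
  obtain ⟨h, hh⟩ := MulAction.exists_smul_eq G P R
  have hRmap : (R : Subgroup G) =
      Subgroup.map (MulAut.conj h).toMonoidHom (Subgroup.zpowers x) := by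
    rw [← hh, Sylow.coe_subgroup_smul, hP]
    rfl
  have hRnorm : Subgroup.normalizer ((R : Subgroup G) : Set G) = R := by
    rw [hRmap, ← Subgroup.map_equiv_normalizer_eq, hself]
  -- Frattini argument inside the normalizer of H
  have hHN : H ≤ (Subgroup.normalizer (H : Set G)) := Subgroup.le_normalizer
  have hRN : (R : Subgroup G) ≤ (Subgroup.normalizer (H : Set G)) := hRH.trans hHN
  haveI : (H.subgroupOf (Subgroup.normalizer (H : Set G))).Normal := Subgroup.normal_in_normalizer
  have hPle : ↑(R.subtype hRN) ≤ H.subgroupOf (Subgroup.normalizer (H : Set G)) := by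
    rw [Sylow.coe_subtype]
    exact fun a ha => Subgroup.mem_subgroupOf.mpr (hRH (Subgroup.mem_subgroupOf.mp ha))
  have hfrat := Sylow.normalizer_sup_eq_top' (N := H.subgroupOf (Subgroup.normalizer (H : Set G)))
    (R.subtype hRN) hPle
  have hnorm2 : Subgroup.normalizer (((R : Subgroup G).subgroupOf (Subgroup.normalizer (H : Set G))) : Set ↥((Subgroup.normalizer (H : Set G)))) ≤
      H.subgroupOf (Subgroup.normalizer (H : Set G)) := by
    have hRnormle : Subgroup.normalizer ((R : Subgroup G) : Set G) ≤ (Subgroup.normalizer (H : Set G)) := by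
      rw [hRnorm]; exact hRN
    rw [← Subgroup.subgroupOf_normalizer_eq hRN, hRnorm]
    exact fun a ha => Subgroup.mem_subgroupOf.mpr (hRH (Subgroup.mem_subgroupOf.mp ha))
  have htop : H.subgroupOf (Subgroup.normalizer (H : Set G)) = ⊤ := by
    rw [eq_top_iff, ← hfrat]
    rw [← Sylow.coe_coe, Sylow.coe_subtype]
    exact sup_le hnorm2 le_rfl
  exact le_antisymm (Subgroup.subgroupOf_eq_top.mp htop) Subgroup.le_normalizer
end

section
/- Let G be a finite group and let K ≤ H be subgroups of G. If H is 𝔑-subnormal in G and H is nilpotent, then K is 𝔑-subnormal in G. -/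
variable {G : Type*}

def NStep [Group G] (A B : Subgroup G) : Prop :=
  IsMaximalSubgroupOf A B ∧ NilpotentQuotByCore A B

theorem nsubnormal_to_rtg [Group G] {H : Subgroup G} (h : NSubnormal H) :
    Relation.ReflTransGen NStep H ⊤ := by
  rcases h with rfl | ⟨n, c, h0, hlast, hstep⟩
  · exact .refl
  · subst h0
    rw [← hlast]
    have key : ∀ i : Fin (n+1), Relation.ReflTransGen NStep (c 0) (c i) := by
      intro i
      induction i using Fin.induction with
      | zero => exact .refl
      | succ j ihj => exact ihj.tail (hstep j)
    exact key _

theorem rtg_to_nsubnormal [Group G] {H : Subgroup G}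
    (h : Relation.ReflTransGen NStep H ⊤) : NSubnormal H := by
  induction h using Relation.ReflTransGen.head_induction_on with
  | refl => exact Or.inl rfl
  | head hac _ ih =>
    rename_i a c _
    rcases ih with rfl | ⟨n, ch, h0, hlast, hstep⟩
    · refine Or.inr ⟨1, ![a, ⊤], rfl, rfl, ?_⟩
      intro i
      fin_cases i
      exact hac
    · subst h0
      refine Or.inr ⟨n + 1, Fin.cons a ch, Fin.cons_zero _ _, ?_, ?_⟩
      · rw [← Fin.succ_last, Fin.cons_succ]; exact hlast
      · intro i
        induction i using Fin.cases with
        | zero =>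
          have e1 : (Fin.cons a ch : Fin (n+2) → Subgroup G) ((0 : Fin (n+1)).castSucc) = a := by
            rw [Fin.castSucc_zero, Fin.cons_zero]
          have e2 : (Fin.cons a ch : Fin (n+2) → Subgroup G) ((0 : Fin (n+1)).succ) = ch 0 :=
            Fin.cons_succ _ _ _
          rw [e1, e2]
          exact hac
        | succ j =>
          have h1 : (j.succ).castSucc = (j.castSucc).succ := by
            simp [Fin.ext_iff]
          rw [h1, Fin.cons_succ, Fin.cons_succ]
          exact hstep j

theorem card_lt_of_lt [Group G] [Finite G] {A B : Subgroup G} (h : A < B) :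
    Nat.card ↥A < Nat.card ↥B := by
  have hs : (A : Set G) ⊂ (B : Set G) := SetLike.coe_ssubset_coe.mpr h
  rw [← SetLike.coe_sort_coe A, ← SetLike.coe_sort_coe B,
    Nat.card_coe_set_eq, Nat.card_coe_set_eq]
  exact Set.ncard_lt_ncard hs (Set.toFinite _)

theorem chain_to_self [Group G] [Finite G] :
    ∀ (n : ℕ) (H : Subgroup G), Nat.card ↥H = n → Group.IsNilpotent ↥H →
      ∀ K : Subgroup G, K ≤ H → Relation.ReflTransGen NStep K H := by
  intro n
  induction n using Nat.strong_induction_on with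
  | _ n ih =>
    intro H hn hnil K hKH
    rcases eq_or_lt_of_le hKH with rfl | hlt
    · exact .refl
    · obtain ⟨M, ⟨hKM, hMH⟩, hmax⟩ := Set.Finite.exists_maximalFor id
        {L : Subgroup G | K ≤ L ∧ L < H} (Set.toFinite _) ⟨K, le_rfl, hlt⟩
      have hmaxsub : IsMaximalSubgroupOf M H := by
        refine ⟨hMH, fun L hML hLH => ?_⟩
        by_contra hne
        exact hML.ne (le_antisymm hML.le (hmax ⟨hKM.trans hML.le, lt_of_le_of_ne hLH hne⟩ hML.le))
      haveI := hnil
      have hquot : NilpotentQuotByCore M H := by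
        unfold NilpotentQuotByCore
        infer_instance
      have hMnil : Group.IsNilpotent ↥M :=
        nilpotent_of_mulEquiv (Subgroup.subgroupOfEquivOfLe hMH.le)
      have hrec := ih (Nat.card ↥M) (hn ▸ card_lt_of_lt hMH) M rfl hMnil K hKM
      exact hrec.tail ⟨hmaxsub, hquot⟩

theorem stmt_6 [Group G] [Finite G] (K H : Subgroup G) (hKH : K ≤ H)
    (hH : NSubnormal H) (hnil : Group.IsNilpotent ↥H) : NSubnormal K :=
  rtg_to_nsubnormal ((chain_to_self _ H rfl hnil K hKH).trans (nsubnormal_to_rtg hH))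
end

section
/- Let G be a finite soluble group that is not nilpotent. Suppose there exist a prime p and an element x of G such that the cyclic subgroup ⟨x⟩ is a Sylow p-subgroup of G, ⟨x⟩ is 𝔑-abnormal in G, G = G′ ⋊ ⟨x⟩ (i.e. G′⟨x⟩ = G and G′ ∩ ⟨x⟩ = 1), the derived subgroup G′ equals the nilpotent residual G^𝔑 of G, and the subgroup G′⟨x^p⟩ is nilpotent. Then every proper subgroup of G is either 𝔑-subnormal in G or 𝔑-abnormal in G. -/
variable {G : Type*}

open Subgroup Pointwise
open scoped commutatorElement

lemma quotNilpotentOfCommutatorLe {Γ : Type*} [Group Γ] (N : Subgroup Γ) [N.Normal]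
    (h : commutator Γ ≤ N) : Group.IsNilpotent (Γ ⧸ N) := by
  have hc : ∀ a b : Γ ⧸ N, a * b = b * a := by
    intro a b
    induction a using QuotientGroup.induction_on with | _ a => ?_
    induction b using QuotientGroup.induction_on with | _ b => ?_
    rw [← QuotientGroup.mk_mul, ← QuotientGroup.mk_mul, QuotientGroup.eq]
    have he : (a * b)⁻¹ * (b * a) = ⁅b⁻¹, a⁻¹⁆ := by group
    rw [he]
    exact h (commutator_mem_commutator (mem_top _) (mem_top _))
  letI : CommGroup (Γ ⧸ N) := { (inferInstance : Group (Γ ⧸ N)) with mul_comm := hc }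
  exact CommGroup.isNilpotent

lemma memNormalCoreIff {A : Type*} [Group A] {H : Subgroup A} {a : A} :
    a ∈ H.normalCore ↔ ∀ b : A, b * a * b⁻¹ ∈ H := Iff.rfl

lemma normalCoreMapEquiv {A B : Type*} [Group A] [Group B] (e : A ≃* B) (N : Subgroup A) :
    (N.map (e : A →* B)).normalCore = N.normalCore.map (e : A →* B) := by
  ext b
  obtain ⟨a, rfl⟩ := e.surjective b
  simp only [memNormalCoreIff]
  constructor
  · intro hb
    refine ⟨a, fun c => ?_, rfl⟩
    have h2 := hb (e c)
    rw [← map_mul, ← map_inv, ← map_mul] at h2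
    obtain ⟨d, hd, hde⟩ := h2
    rwa [e.injective hde] at hd
  · rintro ⟨a', ha', hae⟩ c
    obtain ⟨c', rfl⟩ := e.surjective c
    exact ⟨c' * a' * c'⁻¹, ha' c', by rw [map_mul, map_mul, map_inv, hae]; rfl⟩

lemma mapSymmMap {A : Type*} [Group A] (e : A ≃* A) (H : Subgroup A) :
    (H.map (e : A →* A)).map (e.symm : A →* A) = H := by
  ext a
  simp only [Subgroup.mem_map]
  constructor
  · rintro ⟨b, ⟨c, hc, rfl⟩, rfl⟩; simpa using hc
  · intro ha; exact ⟨e a, ⟨a, ha, rfl⟩, by simp⟩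

lemma mapLtMap {A : Type*} [Group A] (e : A ≃* A) {H K : Subgroup A} (h : H < K) :
    H.map (e : A →* A) < K.map (e : A →* A) := by
  refine lt_of_le_of_ne (Subgroup.map_mono h.le) (fun heq => h.ne ?_)
  have := congrArg (fun S => Subgroup.map (e.symm : A →* A) S) heq
  simpa [mapSymmMap] using this

lemma subgroupOfMapEquiv {A : Type*} [Group A] (e : A ≃* A) (K L : Subgroup A) :
    (K.map (e : A →* A)).subgroupOf (L.map (e : A →* A))
      = (K.subgroupOf L).map (e.subgroupMap L : ↥L →* ↥(L.map (e : A →* A))) := by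
  ext b
  obtain ⟨b, hb⟩ := b
  obtain ⟨a, haL, rfl⟩ := hb
  simp only [Subgroup.mem_subgroupOf, Subgroup.mem_map]
  constructor
  · rintro ⟨a', ha', hae⟩
    refine ⟨⟨a, haL⟩, ?_, ?_⟩
    · simp only [Subgroup.mem_subgroupOf]
      rwa [e.injective hae] at ha'
    · apply Subtype.ext
      simp [MulEquiv.coe_subgroupMap_apply]
  · rintro ⟨⟨a', ha'L⟩, ha'K, hae⟩
    have : e a' = e a := congrArg Subtype.val hae
    exact ⟨a', by simpa using ha'K, this⟩

lemma nilpQuotMapEquiv [Group G] (e : G ≃* G) {K L : Subgroup G}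
    (h : NilpotentQuotByCore K L) :
    NilpotentQuotByCore (K.map (e : G →* G)) (L.map (e : G →* G)) := by
  unfold NilpotentQuotByCore at *
  haveI := h
  have h1 : ((K.subgroupOf L).normalCore).map ((e.subgroupMap L : ↥L →* ↥(L.map (e : G →* G))))
      = ((K.map (e : G →* G)).subgroupOf (L.map (e : G →* G))).normalCore := by
    rw [subgroupOfMapEquiv, normalCoreMapEquiv (e.subgroupMap L)]
  have e2 := QuotientGroup.congr (K.subgroupOf L).normalCore
    ((K.map (e : G →* G)).subgroupOf (L.map (e : G →* G))).normalCore (e.subgroupMap L) h1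
  exact nilpotent_of_surjective e2.toMonoidHom e2.surjective

lemma maxMapEquiv [Group G] (e : G ≃* G) {K L : Subgroup G} (h : IsMaximalSubgroupOf K L) :
    IsMaximalSubgroupOf (K.map (e : G →* G)) (L.map (e : G →* G)) := by
  obtain ⟨hlt, hmax⟩ := h
  refine ⟨mapLtMap e hlt, fun M hKM hML => ?_⟩
  have h1 : K < M.map (e.symm : G →* G) := by
    have := mapLtMap e.symm hKM
    rwa [mapSymmMap] at this
  have h2 : M.map (e.symm : G →* G) ≤ L := by
    have := Subgroup.map_mono (f := (e.symm : G →* G)) hML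
    rwa [mapSymmMap] at this
  have h3 := hmax _ h1 h2
  have := congrArg (fun S => Subgroup.map (e : G →* G) S) h3
  simpa [show ∀ H : Subgroup G, (H.map (e.symm : G →* G)).map (e : G →* G) = H from
    fun H => by simpa using mapSymmMap e.symm H] using this

lemma nsubnormalCons [Group G] {H M : Subgroup G} (hmax : IsMaximalSubgroupOf H M)
    (hq : NilpotentQuotByCore H M) (hM : NSubnormal M) : NSubnormal H := by
  rcases hM with rfl | ⟨n, c, hc0, hclast, hstep⟩
  · right
    refine ⟨1, ![H, ⊤], rfl, rfl, fun i => ?_⟩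
    fin_cases i
    exact ⟨by simpa using hmax, by simpa using hq⟩
  · right
    refine ⟨n + 1, Fin.cons H c, Fin.cons_zero _ _, ?_, fun i => ?_⟩
    · rw [show Fin.last (n + 1) = (Fin.last n).succ from rfl, Fin.cons_succ]
      exact hclast
    · induction i using Fin.cases with
      | zero =>
        have h1 : (Fin.cons H c : Fin (n + 2) → Subgroup G) (Fin.castSucc 0) = H := by
          simp
        have h2 : (Fin.cons H c : Fin (n + 2) → Subgroup G) (Fin.succ 0) = M := by
          rw [show (Fin.succ 0 : Fin (n + 2)) = Fin.succ 0 from rfl, Fin.cons_succ, hc0]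
        rw [h1, h2]
        exact ⟨hmax, hq⟩
      | succ j =>
        have h1 : (Fin.cons H c : Fin (n + 2) → Subgroup G) (Fin.castSucc j.succ)
            = c j.castSucc := by
          rw [← Fin.succ_castSucc, Fin.cons_succ]
        have h2 : (Fin.cons H c : Fin (n + 2) → Subgroup G) (Fin.succ j.succ) = c j.succ := by
          rw [Fin.cons_succ]
        rw [h1, h2]
        exact hstep j

lemma nsubBelow [Group G] [Finite G] {T : Subgroup G} (hTnil : Group.IsNilpotent ↥T)
    (hT : NSubnormal T) : ∀ H : Subgroup G, H ≤ T → NSubnormal H := by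
  have nilpOfLe : ∀ M : Subgroup G, M ≤ T → Group.IsNilpotent ↥M := fun M hMT => by
    haveI := hTnil
    have e := Subgroup.subgroupOfEquivOfLe hMT
    exact nilpotent_of_surjective e.toMonoidHom e.surjective
  have key : ∀ n : ℕ, ∀ H : Subgroup G, H ≤ T → Nat.card ↥T - Nat.card ↥H ≤ n →
      NSubnormal H := by
    intro n
    induction n with
    | zero =>
      intro H hHT hcard
      have h0 : 0 < Nat.card ↥H := Nat.card_pos
      have h1 : Nat.card ↥H ≤ Nat.card ↥T := Subgroup.card_le_of_le hHT
      have heq : H = T := Subgroup.eq_of_le_of_card_ge hHT (by omega)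
      rw [heq]; exact hT
    | succ n ih =>
      intro H hHT hcard
      rcases eq_or_lt_of_le hHT with rfl | hlt
      · exact hT
      obtain ⟨k, ⟨M, ⟨hHM, hMT⟩, hk⟩, hmin⟩ := Nat.lt_wfRel.wf.has_min
        {k | ∃ M : Subgroup G, (H < M ∧ M ≤ T) ∧ Nat.card ↥M = k} ⟨_, T, ⟨hlt, le_rfl⟩, rfl⟩
      have hmaxHM : IsMaximalSubgroupOf H M := by
        refine ⟨hHM, fun M' hHM' hM'M => ?_⟩
        have hnlt : ¬ Nat.card ↥M' < k := hmin _ ⟨M', ⟨hHM', le_trans hM'M hMT⟩, rfl⟩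
        exact Subgroup.eq_of_le_of_card_ge hM'M (by omega)
      have hq : NilpotentQuotByCore H M := by
        haveI := nilpOfLe M hMT
        exact nilpotent_of_surjective (QuotientGroup.mk' _) (QuotientGroup.mk'_surjective _)
      have hcardHM : Nat.card ↥H < Nat.card ↥M :=
        lt_of_le_of_ne (Subgroup.card_le_of_le hHM.le)
          (fun he => hHM.ne (Subgroup.eq_of_le_of_card_ge hHM.le he.ge))
      have hcardMT : Nat.card ↥M ≤ Nat.card ↥T := Subgroup.card_le_of_le hMT
      exact nsubnormalCons hmaxHM hq (ih M hMT (by omega))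
  exact fun H hHT => key _ H hHT le_rfl

theorem stmt_9 [Group G] [Finite G] [Group.IsSolvable G]
    (hG : ¬ Group.IsNilpotent G)
    (p : ℕ) (hp : p.Prime) (x : G)
    (hsyl : ∃ P : Sylow p G, (P : Subgroup G) = Subgroup.zpowers x)
    (habn : NAbnormal (Subgroup.zpowers x))
    (hsup : commutator G ⊔ Subgroup.zpowers x = ⊤)
    (hinf : commutator G ⊓ Subgroup.zpowers x = ⊥)
    (hres : IsNilpotentResidual (commutator G))
    (hnil : Group.IsNilpotent ↥(commutator G ⊔ Subgroup.zpowers (x ^ p))) :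
    ∀ H : Subgroup G, H ≠ ⊤ → NSubnormal H ∨ NAbnormal H := by
  haveI : Fact p.Prime := ⟨hp⟩
  set T : Subgroup G := commutator G ⊔ Subgroup.zpowers (x ^ p) with hTdef
  have hcommT : commutator G ≤ T := le_sup_left
  haveI hTnormal : T.Normal := by
    constructor
    intro n hn g
    have h1 : ⁅g, n⁆ ∈ T :=
      hcommT (_root_.commutator_def G ▸ commutator_mem_commutator (mem_top g) (mem_top n))
    have h2 : g * n * g⁻¹ = ⁅g, n⁆ * n := by group
    rw [h2]; exact T.mul_mem h1 hn
  have hxpT : x ^ p ∈ T := Subgroup.mem_sup_right (Subgroup.mem_zpowers _)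
  have hxT : x ∉ T := by
    intro hx
    apply hG
    have hTtop : T = ⊤ := by
      rw [eq_top_iff, ← hsup]
      exact sup_le hcommT (Subgroup.zpowers_le.mpr hx)
    rw [hTtop] at hnil
    exact Group.isNilpotent_top.mp hnil
  set π : G →* G ⧸ T := QuotientGroup.mk' T with hπdef
  have hq1 : π x ≠ 1 := fun h => hxT ((QuotientGroup.eq_one_iff x).mp h)
  have hqp : π x ^ p = 1 := by rw [← map_pow]; exact (QuotientGroup.eq_one_iff _).mpr hxpT
  have horder : orderOf (π x) = p := orderOf_eq_prime hqp hq1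
  have hmapcomm : Subgroup.map π (commutator G) = ⊥ := by
    rw [eq_bot_iff]
    refine le_trans (Subgroup.map_mono hcommT) ?_
    rw [hπdef, QuotientGroup.map_mk'_self]
  have hgen : Subgroup.zpowers (π x) = ⊤ := by
    have h1 := congrArg (Subgroup.map π) hsup
    rw [Subgroup.map_sup, hmapcomm, bot_sup_eq, MonoidHom.map_zpowers,
      Subgroup.map_top_of_surjective π (QuotientGroup.mk'_surjective T)] at h1
    exact h1
  have hcard : Nat.card (G ⧸ T) = p := by
    rw [← horder, ← Nat.card_zpowers, hgen]
    exact Subgroup.card_top.symm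
  have hTlt : T < ⊤ := lt_top_iff_ne_top.mpr (fun h => hxT (h ▸ Subgroup.mem_top x))
  have hTmax : IsMaximalSubgroupOf T ⊤ := by
    refine ⟨hTlt, fun M hTM _ => ?_⟩
    have hMb : Subgroup.map π M ≠ ⊥ := by
      intro hb
      have hle : M ≤ T := by
        intro m hm
        have h3 : π m ∈ Subgroup.map π M := Subgroup.mem_map_of_mem π hm
        rw [hb, Subgroup.mem_bot] at h3
        exact (QuotientGroup.eq_one_iff m).mp h3
      exact absurd hle hTM.not_ge
    have hdvd : Nat.card ↥(Subgroup.map π M) ∣ p := hcard ▸ Subgroup.card_subgroup_dvd_card _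
    have hne1 : Nat.card ↥(Subgroup.map π M) ≠ 1 := fun h1 =>
      hMb (Subgroup.eq_bot_of_card_eq _ h1)
    have hcardM : Nat.card ↥(Subgroup.map π M) = p :=
      (hp.eq_one_or_self_of_dvd _ hdvd).resolve_left hne1
    have htop : Subgroup.map π M = ⊤ :=
      Subgroup.eq_top_of_card_eq _ (by rw [hcardM, hcard])
    have h2 : Subgroup.comap π (Subgroup.map π M) = M := by
      rw [Subgroup.comap_map_eq, hπdef, QuotientGroup.ker_mk', sup_eq_left.mpr hTM.le]
    rw [htop, Subgroup.comap_top] at h2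
    exact h2.symm
  have hqcT : NilpotentQuotByCore T ⊤ := by
    unfold NilpotentQuotByCore
    apply quotNilpotentOfCommutatorLe
    rw [Subgroup.normal_le_normalCore]
    intro z hz
    rw [Subgroup.mem_subgroupOf]
    have h3 : (z : G) ∈ Subgroup.map (⊤ : Subgroup G).subtype (commutator ↥(⊤ : Subgroup G)) :=
      Subgroup.mem_map_of_mem _ hz
    rw [_root_.commutator_def, Subgroup.map_commutator] at h3
    exact hcommT (_root_.commutator_def G ▸ Subgroup.commutator_mono le_top le_top h3)
  have hTsub : NSubnormal T := nsubnormalCons hTmax hqcT (Or.inl rfl)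
  intro H hHne
  by_cases hHT : H ≤ T
  · exact Or.inl (nsubBelow hnil hTsub H hHT)
  right
  haveI : Finite (Subgroup G) :=
    Finite.of_injective (fun S : Subgroup G => (S : Set G)) SetLike.coe_injective
  haveI : Finite (Sylow p G) :=
    Finite.of_injective (fun P : Sylow p G => (P : Subgroup G))
      (fun P Q h => Sylow.ext h)
  obtain ⟨P, hP⟩ := hsyl
  obtain ⟨h, hhH, hhT⟩ := SetLike.not_le_iff_exists.mp hHT
  have hord0 : orderOf h ≠ 0 := (orderOf_pos h).ne'
  set m : ℕ := orderOf h / p ^ (orderOf h).factorization p with hmdef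
  have hm_dvd : m ∣ orderOf h := Nat.div_dvd_of_dvd (Nat.ordProj_dvd _ p)
  have hpm : ¬ p ∣ m := Nat.not_dvd_ordCompl hp hord0
  have horda : orderOf (h ^ m) = p ^ (orderOf h).factorization p := by
    rw [orderOf_pow, Nat.gcd_eq_right hm_dvd]
    have hm0 : m ≠ 0 := fun h0 => hord0 (by
      have hmm := Nat.ordProj_mul_ordCompl_eq_self (orderOf h) p
      rw [← hmdef, h0, mul_zero] at hmm
      exact hmm.symm)
    have hmm := Nat.ordProj_mul_ordCompl_eq_self (orderOf h) p
    rw [← hmdef] at hmm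
    exact Nat.div_eq_of_eq_mul_left (Nat.pos_of_ne_zero hm0) hmm.symm
  have hpgroup : IsPGroup p (Subgroup.zpowers (h ^ m)) :=
    IsPGroup.of_card (by rw [Nat.card_zpowers, horda])
  obtain ⟨Q, hQle⟩ := hpgroup.exists_le_sylow
  obtain ⟨g, hg⟩ := MulAction.exists_smul_eq G P Q
  set e : G ≃* G := (MulAut.conj g : G ≃* G) with hedef
  set y : G := e x with hydef
  have hQ : (Q : Subgroup G) = Subgroup.zpowers y := by
    rw [← hg]
    have h1 : ((g • P : Sylow p G) : Subgroup G) = (P : Subgroup G).map (e : G →* G) := rfl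
    rw [h1, hP, MonoidHom.map_zpowers]
    rfl
  have hhmQ : h ^ m ∈ Subgroup.zpowers y := by
    rw [← hQ]
    exact hQle (Subgroup.mem_zpowers _)
  obtain ⟨k, hk⟩ := Subgroup.mem_zpowers_iff.mp hhmQ
  have hordπh : orderOf (π h) = p := by
    have h1 : π h ≠ 1 := fun hh => hhT ((QuotientGroup.eq_one_iff h).mp hh)
    have h2 : orderOf (π h) ∣ p := hcard ▸ orderOf_dvd_natCard (π h)
    refine (hp.eq_one_or_self_of_dvd _ h2).resolve_left ?_
    simpa [orderOf_eq_one_iff] using h1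
  have hhmT : h ^ m ∉ T := by
    intro hmem
    have h1 : (π h) ^ m = 1 := by rw [← map_pow]; exact (QuotientGroup.eq_one_iff _).mpr hmem
    exact hpm (hordπh ▸ orderOf_dvd_of_pow_eq_one h1)
  have hypT : y ^ p ∈ T := by
    have h1 : y ^ p = e (x ^ p) := (map_pow e x p).symm
    have h2 : e (x ^ p) = g * (x ^ p) * g⁻¹ := rfl
    rw [h1, h2]
    exact hTnormal.conj_mem _ hxpT g
  have hpk : ¬ (p : ℤ) ∣ k := by
    rintro ⟨t, rfl⟩
    apply hhmT
    rw [← hk, zpow_mul]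
    exact Subgroup.zpow_mem T (by rw [zpow_natCast]; exact hypT) t
  have hxppow : ∃ c : ℕ, x ^ (p ^ c) = 1 := by
    have hPg : IsPGroup p ↥(P : Subgroup G) := P.isPGroup'
    have hxP : x ∈ (P : Subgroup G) := hP ▸ Subgroup.mem_zpowers x
    obtain ⟨c, hc⟩ := hPg ⟨x, hxP⟩
    exact ⟨c, by simpa [Subtype.ext_iff] using hc⟩
  obtain ⟨c, hc⟩ := hxppow
  have hyc : y ^ (p ^ c : ℕ) = 1 := by
    have h1 := map_pow e x (p ^ c)
    rw [hc, map_one] at h1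
    exact h1.symm
  have hcop : IsCoprime ((p : ℤ) ^ c) k :=
    IsCoprime.pow_left ((Nat.prime_iff_prime_int.mp hp).coprime_iff_not_dvd.mpr hpk)
  obtain ⟨u, v, huv⟩ := hcop
  have hyH : y ∈ H := by
    have h1 : y = (y ^ ((p : ℤ) ^ c)) ^ u * (y ^ k) ^ v := by
      rw [← zpow_mul, ← zpow_mul, ← zpow_add, mul_comm ((p : ℤ) ^ c) u, mul_comm k v, huv,
        zpow_one]
    have h2 : y ^ ((p : ℤ) ^ c) = 1 := by
      rw [show ((p : ℤ) ^ c) = ((p ^ c : ℕ) : ℤ) by push_cast; ring, zpow_natCast, hyc]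
    rw [h1, h2, one_zpow, one_mul, hk]
    exact Subgroup.zpow_mem H (Subgroup.pow_mem H hhH m) v
  have hconjle : Subgroup.map (e : G →* G) (Subgroup.zpowers x) ≤ H := by
    rw [MonoidHom.map_zpowers]
    exact Subgroup.zpowers_le.mpr hyH
  intro K L hHK hmax hq
  have hxle : Subgroup.zpowers x ≤ K.map (e.symm : G →* G) := by
    have h1 := Subgroup.map_mono (f := (e.symm : G →* G)) (le_trans hconjle hHK)
    rwa [mapSymmMap e (Subgroup.zpowers x)] at h1
  exact habn _ _ hxle (maxMapEquiv e.symm hmax) (nilpQuotMapEquiv e.symm hq)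
end

section
/- Let G be a finite group and let A ≤ B ≤ G be subgroups. If A is 𝔑-abnormal in G, then A is 𝔑-abnormal in B and N_G(A) = A. -/
variable {G : Type*}

lemma mem_normalCore_iff' {G : Type*} [Group G] (H : Subgroup G) (x : G) :
    x ∈ H.normalCore ↔ ∀ b : G, b * x * b⁻¹ ∈ H := Iff.rfl

lemma normalCore_map_equiv' {G H : Type*} [Group G] [Group H] (e : G ≃* H) (N : Subgroup G) :
    (N.map e.toMonoidHom).normalCore = N.normalCore.map e.toMonoidHom := by
  ext x
  simp only [Subgroup.mem_map, mem_normalCore_iff']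
  constructor
  · intro h
    refine ⟨e.symm x, fun b => ?_, e.apply_symm_apply x⟩
    obtain ⟨y, hy, hyx⟩ := h (e b)
    have : y = b * e.symm x * b⁻¹ := by
      apply e.injective
      rw [show (e y : H) = e.toMonoidHom y from rfl, hyx]
      simp
    rwa [this] at hy
  · rintro ⟨y, hy, rfl⟩ b
    refine ⟨e.symm b * y * (e.symm b)⁻¹, hy (e.symm b), ?_⟩
    simp

lemma nilpQuot_transfer' {G H : Type*} [Group G] [Group H] (e : G ≃* H)
    (N : Subgroup G) (N' : Subgroup H) [N.Normal] [N'.Normal]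
    (h : N.map e.toMonoidHom = N')
    (hnil : Group.IsNilpotent (G ⧸ N)) : Group.IsNilpotent (H ⧸ N') := by
  haveI := hnil
  refine nilpotent_of_surjective
    (QuotientGroup.map N N' e.toMonoidHom
      (fun x hx => Subgroup.mem_comap.mpr (h ▸ Subgroup.mem_map_of_mem _ hx))) ?_
  intro y
  obtain ⟨x, rfl⟩ := QuotientGroup.mk_surjective y
  exact ⟨QuotientGroup.mk (e.symm x), by simp [QuotientGroup.map_mk]⟩

lemma nilpQuotByCore_map_subtype {G : Type*} [Group G] (B : Subgroup G) (K L : Subgroup B)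
    (h : NilpotentQuotByCore K L) :
    NilpotentQuotByCore (K.map B.subtype) (L.map B.subtype) := by
  unfold NilpotentQuotByCore at *
  have e := L.equivMapOfInjective B.subtype B.subtype_injective
  have key : (K.subgroupOf L).map (L.equivMapOfInjective B.subtype B.subtype_injective).toMonoidHom
      = (K.map B.subtype).subgroupOf (L.map B.subtype) := by
    ext ⟨g, hg⟩
    simp only [Subgroup.mem_map, Subgroup.mem_subgroupOf]
    constructor
    · rintro ⟨⟨x, hxL⟩, hx, hex⟩
      simp only [Subgroup.mem_subgroupOf] at hx
      have hcoe : (B.subtype x : G) = g := by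
        have := congrArg (Subtype.val) hex
        simpa using this
      exact ⟨x, hx, hcoe⟩
    · rintro ⟨b, hbK, rfl⟩
      have hbL : b ∈ L := by
        obtain ⟨c, hcL, hc⟩ := hg
        have : c = b := Subtype.ext hc
        rwa [this] at hcL
      refine ⟨⟨b, hbL⟩, by simpa [Subgroup.mem_subgroupOf], Subtype.ext rfl⟩
  exact nilpQuot_transfer' (L.equivMapOfInjective B.subtype B.subtype_injective)
    (K.subgroupOf L).normalCore _ (by rw [← normalCore_map_equiv', key]) h

theorem stmt_12 [Group G] [Finite G] (A B : Subgroup G) (hAB : A ≤ B)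
    (hA : NAbnormal A) :
    NAbnormal (A.subgroupOf B) ∧ Subgroup.normalizer (A : Set G) = A := by
  constructor
  · -- NAbnormal in B
    intro K L hK hmax hnil
    have hLB : L.map B.subtype ≤ B := Subgroup.map_subtype_le L
    have hinj : Function.Injective (Subgroup.map B.subtype : Subgroup B → Subgroup G) :=
      Subgroup.map_injective B.subtype_injective
    refine hA (K.map B.subtype) (L.map B.subtype) ?_ ?_
      (nilpQuotByCore_map_subtype B K L hnil)
    · -- A ≤ K.map B.subtype
      have hA' : A = (A.subgroupOf B).map B.subtype := by
        rw [Subgroup.subgroupOf_map_subtype, inf_eq_left.mpr hAB]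
      rw [hA']
      exact Subgroup.map_mono hK
    · -- maximality
      constructor
      · rcases hmax with ⟨hlt, _⟩
        exact lt_of_le_of_ne (Subgroup.map_mono hlt.le) (fun h => hlt.ne (hinj h))
      · intro M hKM hML
        have hMB : M ≤ B := hML.trans hLB
        have hM' : (M.subgroupOf B).map B.subtype = M := by
          rw [Subgroup.subgroupOf_map_subtype, inf_eq_left.mpr hMB]
        have h1le : K ≤ M.subgroupOf B := fun x hx =>
          Subgroup.mem_subgroupOf.mpr (hKM.le (Subgroup.mem_map_of_mem _ hx))
        have h1 : K < M.subgroupOf B :=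
          lt_of_le_of_ne h1le (fun h => hKM.ne (by rw [h, hM']))
        have h2 : M.subgroupOf B ≤ L := fun x hx => by
          have hxM : (x : G) ∈ M := Subgroup.mem_subgroupOf.mp hx
          obtain ⟨y, hy, hyx⟩ := hML hxM
          rwa [show y = x from Subtype.ext hyx] at hy
        rw [← hM', hmax.2 _ h1 h2]
  · -- normalizer = A
    by_contra hne
    have hlt : A < (Subgroup.normalizer (A : Set G)) := lt_of_le_of_ne Subgroup.le_normalizer (Ne.symm hne)
    haveI : Finite (Subgroup G) := inferInstance
    obtain ⟨L, ⟨hAL, hLN⟩, hmin⟩ :=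
      (Finite.to_wellFoundedLT (α := Subgroup G)).wf.has_min
        {L : Subgroup G | A < L ∧ L ≤ (Subgroup.normalizer (A : Set G))} ⟨(Subgroup.normalizer (A : Set G)), hlt, le_rfl⟩
    have hmax : IsMaximalSubgroupOf A L := by
      refine ⟨hAL, fun M hAM hML => ?_⟩
      by_contra hne'
      exact hmin M ⟨hAM, hML.trans hLN⟩ (lt_of_le_of_ne hML hne')
    apply hA A L le_rfl hmax
    -- NilpotentQuotByCore A L
    unfold NilpotentQuotByCore
    haveI hnorm : (A.subgroupOf L).Normal := by
      constructor
      intro n hn g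
      have hg : (g : G) ∈ (Subgroup.normalizer (A : Set G)) := hLN g.2
      simp only [Subgroup.mem_subgroupOf] at hn ⊢
      exact (Subgroup.mem_normalizer_iff.mp hg _).mp hn
    have hcomm : ∀ a b : ↥L ⧸ (A.subgroupOf L), a * b = b * a := by
      rcases subsingleton_or_nontrivial (↥L ⧸ (A.subgroupOf L)) with hQ | hQ
      · intro a b; exact Subsingleton.elim _ _
      · obtain ⟨x, hx1⟩ := exists_ne (1 : ↥L ⧸ (A.subgroupOf L))
        intro a b
        have key : Subgroup.zpowers x = ⊤ := by
          set P := (Subgroup.zpowers x).comap (QuotientGroup.mk' (A.subgroupOf L)) with hP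
          have hkerP : A.subgroupOf L ≤ P := by
            intro z hz
            simp only [hP, Subgroup.mem_comap]
            have hz1 : QuotientGroup.mk' (A.subgroupOf L) z = 1 := by
              rw [← QuotientGroup.ker_mk' (A.subgroupOf L)] at hz
              exact hz
            rw [hz1]; exact Subgroup.one_mem _
          have hAP : A ≤ P.map L.subtype := by
            intro a ha
            have haL : a ∈ L := hAL.le ha
            exact ⟨⟨a, haL⟩, hkerP (Subgroup.mem_subgroupOf.mpr ha), rfl⟩
          have hPL : P.map L.subtype ≤ L := Subgroup.map_subtype_le P
          have hALP : A < P.map L.subtype := by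
            refine lt_of_le_of_ne hAP (fun h => ?_)
            obtain ⟨z, rfl⟩ := QuotientGroup.mk_surjective x
            have hzP : z ∈ P := by
              simp only [hP, Subgroup.mem_comap]
              exact Subgroup.mem_zpowers _
            have hz2 : (z : G) ∈ P.map L.subtype := Subgroup.mem_map_of_mem _ hzP
            rw [← h] at hz2
            exact hx1 ((QuotientGroup.eq_one_iff z).mpr (Subgroup.mem_subgroupOf.mpr hz2))
          have hPeq : P.map L.subtype = L := hmax.2 _ hALP hPL
          have hPtop : P = ⊤ := by
            apply Subgroup.map_injective L.subtype_injective
            rw [hPeq]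
            exact le_antisymm (fun g hg => ⟨⟨g, hg⟩, trivial, rfl⟩)
              (Subgroup.map_subtype_le ⊤)
          rw [eq_top_iff]
          intro q _
          obtain ⟨z, rfl⟩ := QuotientGroup.mk_surjective q
          have hz3 : z ∈ P := hPtop ▸ Subgroup.mem_top z
          simpa [hP, Subgroup.mem_comap] using hz3
        have ha : a ∈ Subgroup.zpowers x := key ▸ Subgroup.mem_top a
        have hb : b ∈ Subgroup.zpowers x := key ▸ Subgroup.mem_top b
        obtain ⟨m, hm⟩ := ha
        obtain ⟨n, hn⟩ := hb
        rw [← hm, ← hn, zpow_mul_comm]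
    haveI hnilQ : Group.IsNilpotent (↥L ⧸ (A.subgroupOf L)) := by
      refine ⟨⟨1, ?_⟩⟩
      rw [upperCentralSeries_one, eq_top_iff]
      intro g _
      exact Subgroup.mem_center_iff.mpr (fun h => hcomm h g)
    exact nilpotent_of_surjective
      (QuotientGroup.quotientMulEquivOfEq (Subgroup.normalCore_eq_self (A.subgroupOf L)).symm).toMonoidHom
      (MulEquiv.surjective _)
end

section
/- Let G be a finite group and let A ≤ B ≤ G be subgroups. If A is 𝔑-abnormal in G, then B is 𝔑-abnormal in G and N_G(B) = B. -/
variable {G : Type*}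

theorem stmt_13 [Group G] [Finite G] (A B : Subgroup G) (hAB : A ≤ B)
    (hA : NAbnormal A) :
    NAbnormal B ∧ Subgroup.normalizer (B : Set G) = B := by
  constructor
  · intro K L hBK hmax
    exact hA K L (hAB.trans hBK) hmax
  · by_contra hne
    have hBlt : B < Subgroup.normalizer (B : Set G) := lt_of_le_of_ne B.le_normalizer (Ne.symm hne)
    have hwf : IsWellFounded (Subgroup G) (· < ·) := inferInstance
    obtain ⟨L, ⟨hBL, hLN⟩, hmin⟩ :=
      hwf.wf.has_min {L : Subgroup G | B < L ∧ L ≤ Subgroup.normalizer (B : Set G)} ⟨Subgroup.normalizer (B : Set G), hBlt, le_rfl⟩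
    have hmax : IsMaximalSubgroupOf B L := by
      refine ⟨hBL, fun M hBM hML => ?_⟩
      by_contra hMne
      exact hmin M ⟨hBM, hML.trans hLN⟩ (lt_of_le_of_ne hML hMne)
    refine hA B L hAB hmax ?_
    haveI hnorm : (B.subgroupOf L).Normal := by
      rw [Subgroup.normal_subgroupOf_iff hBL.le]
      intro h k hh hk
      exact (Subgroup.mem_normalizer_iff.mp (hLN hk) h).mp hh
    suffices h : Group.IsNilpotent (↥L ⧸ B.subgroupOf L) by
      exact nilpotent_of_mulEquiv
        (QuotientGroup.quotientMulEquivOfEq (Subgroup.normalCore_eq_self _).symm)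
    set π := QuotientGroup.mk' (B.subgroupOf L) with hπ
    have hker : π.ker = B.subgroupOf L := QuotientGroup.ker_mk' _
    have hsurj : Function.Surjective π := QuotientGroup.mk'_surjective _
    have key : ∀ q : Subgroup (↥L ⧸ B.subgroupOf L), q = ⊥ ∨ q = ⊤ := by
      intro q
      set M := ((q.comap π).map L.subtype : Subgroup G) with hMdef
      have hBM : B ≤ M := by
        intro b hb
        have hbL : b ∈ L := hBL.le hb
        refine ⟨⟨b, hbL⟩, ?_, rfl⟩
        have h1 : (⟨b, hbL⟩ : ↥L) ∈ π.ker := by rw [hker]; exact hb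
        rw [MonoidHom.mem_ker] at h1
        show (⟨b, hbL⟩ : ↥L) ∈ Subgroup.comap π q
        rw [Subgroup.mem_comap, h1]
        exact Subgroup.one_mem _
      have hML : M ≤ L := by
        rintro m ⟨⟨m', hm'⟩, -, rfl⟩
        exact hm'
      rcases eq_or_ne M B with hMB | hMB
      · left
        have hcomap : q.comap π = B.subgroupOf L := by
          apply Subgroup.map_injective L.subtype_injective
          rw [← hMdef, hMB, Subgroup.subgroupOf_map_subtype, inf_eq_left.mpr hBL.le]
        have h2 := congrArg (Subgroup.map π) hcomap
        rw [Subgroup.map_comap_eq_self_of_surjective hsurj] at h2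
        rw [h2]
        exact (Subgroup.map_eq_bot_iff _).mpr hker.ge
      · right
        have hM : M = L := hmax.2 M (lt_of_le_of_ne hBM (Ne.symm hMB)) hML
        have hcomap : q.comap π = ⊤ := by
          apply Subgroup.map_injective L.subtype_injective
          rw [← hMdef, hM, ← MonoidHom.range_eq_map, Subgroup.range_subtype]
        have := congrArg (Subgroup.map π) hcomap
        rwa [Subgroup.map_comap_eq_self_of_surjective hsurj,
          Subgroup.map_top_of_surjective _ hsurj] at this
    have hcyc : IsCyclic (↥L ⧸ B.subgroupOf L) := by
      by_cases htriv : ∀ x : ↥L ⧸ B.subgroupOf L, x = 1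
      · exact ⟨1, fun x => by simp [htriv x]⟩
      · push_neg at htriv
        obtain ⟨g, hg⟩ := htriv
        have hZ : Subgroup.zpowers g = ⊤ :=
          (key (Subgroup.zpowers g)).resolve_left fun h => hg (Subgroup.zpowers_eq_bot.mp h)
        refine ⟨g, fun x => ?_⟩
        have hx : x ∈ Subgroup.zpowers g := by rw [hZ]; exact Subgroup.mem_top x
        exact hx
    letI := hcyc.commGroup
    exact CommGroup.isNilpotent
end

section
/- Let G be a finite soluble group, p a prime, and x an element of G of p-power order such that the cyclic subgroup ⟨x⟩ is self-normalizing in G (N_G(⟨x⟩) = ⟨x⟩). Then ⟨x⟩ is a Sylow p-subgroup of G, G has a normal Hall p′-subgroup G_{p′}, and G_{p′} coincides with the derived subgroup G′ and with the nilpotent residual G^𝔑 of G; in particular G = G′ ⋊ ⟨x⟩ (i.e. G′⟨x⟩ = G and G′ ∩ ⟨x⟩ = 1). -/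
variable {G : Type*}

open scoped commutatorElement IsMulCommutative in
theorem stmt_17 [Group G] [Finite G] [Group.IsSolvable G] (p : ℕ) (hp : p.Prime)
    (x : G) (hx : ∃ k : ℕ, orderOf x = p ^ k)
    (hself : Subgroup.normalizer (Subgroup.zpowers x : Set G) = Subgroup.zpowers x) :
    (∃ P : Sylow p G, (P : Subgroup G) = Subgroup.zpowers x) ∧
    (commutator G).Normal ∧
    ¬ p ∣ Nat.card ↥(commutator G) ∧
    (∃ n : ℕ, (commutator G).index = p ^ n) ∧
    IsNilpotentResidual (commutator G) ∧
    commutator G ⊔ Subgroup.zpowers x = ⊤ ∧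
    commutator G ⊓ Subgroup.zpowers x = ⊥ := by
  haveI : Fact p.Prime := ⟨hp⟩
  obtain ⟨k, hk⟩ := hx
  set Z := Subgroup.zpowers x with hZdef
  have hZp : IsPGroup p Z := IsPGroup.of_card (by rw [Nat.card_zpowers, hk])
  obtain ⟨P, hZP⟩ := hZp.exists_le_sylow
  -- Step 1: ⟨x⟩ is a Sylow p-subgroup
  have hPZ : (P : Subgroup G) = Z := by
    by_contra hne
    have hlt : Z < (P : Subgroup G) := lt_of_le_of_ne hZP (fun h => hne h.symm)
    haveI : Group.IsNilpotent ↥(P : Subgroup G) := P.isPGroup'.isNilpotent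
    have hnc := normalizerCondition_of_isNilpotent (G := ↥(P : Subgroup G))
    have h1 : Z.subgroupOf (P : Subgroup G) < ⊤ := by
      rw [lt_top_iff_ne_top]
      intro h
      exact hlt.ne (le_antisymm hZP (Subgroup.subgroupOf_eq_top.mp h))
    have h2 := hnc _ h1
    obtain ⟨y, hy1, hy2⟩ := SetLike.exists_of_lt h2
    have hyn : (y : G) ∈ Subgroup.normalizer (Z : Set G) := by
      rw [Subgroup.mem_normalizer_iff] at hy1 ⊢
      intro h
      constructor
      · intro hh
        have := (hy1 ⟨h, hZP hh⟩).mp (by rwa [Subgroup.mem_subgroupOf])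
        rwa [Subgroup.mem_subgroupOf] at this
      · intro hh
        have hhP : h ∈ (P : Subgroup G) := by
          have : h = (y : G)⁻¹ * ((y : G) * h * (y : G)⁻¹) * (y : G) := by group
          rw [this]
          exact Subgroup.mul_mem _ (Subgroup.mul_mem _ (Subgroup.inv_mem _ y.2) (hZP hh)) y.2
        have := (hy1 ⟨h, hhP⟩).mpr (by rwa [Subgroup.mem_subgroupOf])
        rwa [Subgroup.mem_subgroupOf] at this
    rw [hself] at hyn
    exact hy2 (by rwa [Subgroup.mem_subgroupOf])
  -- Step 2: Burnside's normal p-complement theorem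
  have hcent : Subgroup.normalizer ((P : Subgroup G) : Set G) ≤ Subgroup.centralizer (P : Set G) := by
    rw [hPZ, hself]
    intro g hg
    rw [Subgroup.mem_centralizer_iff]
    rintro h hh
    have hh' : h ∈ Z := by rw [← hPZ]; exact hh
    obtain ⟨m, rfl⟩ := hg
    obtain ⟨n, rfl⟩ := hh'
    rw [← zpow_add, ← zpow_add, add_comm]
  set K := (MonoidHom.transferSylow P hcent).ker with hKdef
  have hcompl : Subgroup.IsComplement' K (P : Subgroup G) :=
    MonoidHom.ker_transferSylow_isComplement' P hcent
  have hnotdvd : ¬ p ∣ Nat.card K := MonoidHom.not_dvd_card_ker_transferSylow P hcent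
  -- commutator G ≤ K
  haveI : IsMulCommutative (P : Subgroup G) := hPZ ▸ Subgroup.zpowers_isMulCommutative x
  have hCK : commutator G ≤ K := by
    rw [commutator, Subgroup.commutator_le]
    intro g _ h _
    have : MonoidHom.transferSylow P hcent ⁅g, h⁆ = 1 := by
      rw [map_commutatorElement]
      exact commutatorElement_eq_one_iff_commute.mpr (mul_comm _ _)
    exact this
  -- Step 3: Frattini argument gives commutator G ⊔ Z = ⊤
  set N := commutator G ⊔ Z with hNdef
  haveI hNnormal : N.Normal := by
    constructor
    intro n hn g
    have heq : g * n * g⁻¹ = n * ⁅n⁻¹, g⁆ := by group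
    rw [heq]
    exact N.mul_mem hn ((le_sup_left : commutator G ≤ N)
      (Subgroup.commutator_mem_commutator (Subgroup.mem_top _) (Subgroup.mem_top _)))
  have hfr := Sylow.normalizer_sup_eq_top' (N := N) P (hPZ.le.trans le_sup_right)
  rw [show (P : Set G) = (Z : Set G) from congrArg (fun H : Subgroup G => (H : Set G)) hPZ, hself] at hfr
  have hNtop : N = ⊤ := by
    rw [← hfr]
    exact (sup_eq_right.mpr (le_sup_right : Z ≤ N)).symm
  have hsup : commutator G ⊔ Z = ⊤ := hNtop
  -- Step 4: index of commutator divides p ^ k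
  set π := QuotientGroup.mk' (commutator G) with hπdef
  have hπ : Function.Surjective π := QuotientGroup.mk'_surjective _
  have hmapC : (commutator G).map π = ⊥ :=
    (Subgroup.map_eq_bot_iff _).mpr (by rw [QuotientGroup.ker_mk'])
  have htop : Subgroup.zpowers (π x) = ⊤ := by
    have h1 : Subgroup.map π (commutator G ⊔ Z) = ⊤ := by
      rw [hsup]
      exact Subgroup.map_top_of_surjective π hπ
    rwa [Subgroup.map_sup, hmapC, bot_sup_eq, hZdef, MonoidHom.map_zpowers] at h1
  have hcardQ : Nat.card (G ⧸ commutator G) ∣ p ^ k := by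
    rw [← Subgroup.card_top, ← htop, Nat.card_zpowers, ← hk]
    exact orderOf_map_dvd π x
  have hidx : (commutator G).index ∣ p ^ k := by
    rw [Subgroup.index_eq_card]; exact hcardQ
  -- Step 5: K ≤ commutator G
  have hKC : K ≤ commutator G := by
    have h1 : Nat.card (Subgroup.map π K) ∣ Nat.card K :=
      Subgroup.card_dvd_of_surjective _ (π.subgroupMap_surjective K)
    have h2 : Nat.card (Subgroup.map π K) ∣ p ^ k :=
      (Subgroup.card_subgroup_dvd_card _).trans hcardQ
    have hcop : Nat.Coprime (p ^ k) (Nat.card K) :=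
      ((Nat.Prime.coprime_iff_not_dvd hp).mpr hnotdvd).pow_left k
    have hone : Nat.card (Subgroup.map π K) = 1 :=
      Nat.eq_one_of_dvd_coprimes hcop h2 h1
    have hbot : Subgroup.map π K = ⊥ := Subgroup.card_eq_one.mp hone
    have := (Subgroup.map_eq_bot_iff _).mp hbot
    rwa [hπdef, QuotientGroup.ker_mk'] at this
  have hKeq : K = commutator G := le_antisymm hKC hCK
  refine ⟨⟨P, hPZ⟩, inferInstance, hKeq ▸ hnotdvd, ?_, ⟨inferInstance, ?_, ?_⟩, hsup, ?_⟩
  · obtain ⟨n, _, hn⟩ := (Nat.dvd_prime_pow hp).mp hidx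
    exact ⟨n, hn⟩
  · letI : CommGroup (G ⧸ commutator G) := inferInstanceAs (CommGroup (Abelianization G))
    exact CommGroup.isNilpotent
  · intro M hM hnil
    haveI := hM
    haveI : Group.IsNilpotent (G ⧸ M) := hnil
    set σ := QuotientGroup.mk' M with hσdef
    have hσ : Function.Surjective σ := QuotientGroup.mk'_surjective M
    set Pb : Sylow p (G ⧸ M) := Sylow.mapSurjective hσ P with hPbdef
    have hPbnormal : (Pb : Subgroup (G ⧸ M)).Normal :=
      Sylow.normal_of_normalizerCondition normalizerCondition_of_isNilpotent Pb
    set N' := Subgroup.comap σ (Pb : Subgroup (G ⧸ M)) with hN'def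
    haveI : N'.Normal := hPbnormal.comap σ
    have hPN' : (P : Subgroup G) ≤ N' := by
      rw [hN'def, hPbdef, Sylow.coe_mapSurjective]
      exact Subgroup.le_comap_map σ _
    have hfr2 := Sylow.normalizer_sup_eq_top' (N := N') P hPN'
    rw [show (P : Set G) = (Z : Set G) from congrArg (fun H : Subgroup G => (H : Set G)) hPZ, hself] at hfr2
    have hZN' : Z ≤ N' := hPZ ▸ hPN'
    have hN'top : N' = ⊤ := by
      rw [← hfr2]
      exact (sup_eq_right.mpr hZN').symm
    have hPbtop : (Pb : Subgroup (G ⧸ M)) = ⊤ := by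
      rw [eq_top_iff, ← Subgroup.map_top_of_surjective σ hσ, ← hN'top]
      exact Subgroup.map_comap_le σ _
    have hQp : IsPGroup p (G ⧸ M) := by
      have h := Pb.isPGroup'
      rw [hPbtop] at h
      exact h.of_equiv Subgroup.topEquiv
    obtain ⟨n, hn⟩ := IsPGroup.iff_card.mp hQp
    have h1 : Nat.card (Subgroup.map σ K) ∣ Nat.card K :=
      Subgroup.card_dvd_of_surjective _ (σ.subgroupMap_surjective K)
    have h2 : Nat.card (Subgroup.map σ K) ∣ p ^ n :=
      hn ▸ Subgroup.card_subgroup_dvd_card _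
    have hcop : Nat.Coprime (p ^ n) (Nat.card K) :=
      ((Nat.Prime.coprime_iff_not_dvd hp).mpr hnotdvd).pow_left n
    have hone : Nat.card (Subgroup.map σ K) = 1 :=
      Nat.eq_one_of_dvd_coprimes hcop h2 h1
    have hbot : Subgroup.map σ K = ⊥ := Subgroup.card_eq_one.mp hone
    have hKM := (Subgroup.map_eq_bot_iff _).mp hbot
    rw [hσdef, QuotientGroup.ker_mk'] at hKM
    exact hKeq ▸ hKM
  · rw [← hKeq, ← hPZ]
    exact disjoint_iff.mp hcompl.disjoint
end

section
/- Let G be a finite soluble group such that G = G′ ⋊ ⟨x⟩ for some element x (i.e. G′⟨x⟩ = G and G′ ∩ ⟨x⟩ = 1, where G′ is the derived subgroup), where ⟨x⟩ is a Sylow p-subgroup of G for some prime p and ⟨x⟩ is self-normalizing in G. If H is a subgroup of G whose order is divisible by the order of x, then H is self-normalizing in G (N_G(H) = H). -/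
variable {G : Type*}

theorem stmt_18 [Group G] [Finite G] [Group.IsSolvable G] (p : ℕ) (hp : p.Prime) (x : G)
    (hsup : commutator G ⊔ Subgroup.zpowers x = ⊤)
    (hinf : commutator G ⊓ Subgroup.zpowers x = ⊥)
    (hsyl : ∃ P : Sylow p G, (P : Subgroup G) = Subgroup.zpowers x)
    (hself : Subgroup.normalizer (Subgroup.zpowers x : Set G) = Subgroup.zpowers x)
    (H : Subgroup G) (hdvd : orderOf x ∣ Nat.card ↥H) :
    Subgroup.normalizer (H : Set G) = H := by
  haveI := Fact.mk hp
  obtain ⟨Px, hPx⟩ := hsyl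
  set n := (Nat.card G).factorization p with hn
  have hcardx : orderOf x = p ^ n := by
    rw [← Nat.card_zpowers, ← hPx]
    exact Px.card_eq_multiplicity
  -- p-part of |H| equals p^n
  have hHne : Nat.card ↥H ≠ 0 := Nat.card_pos.ne'
  have hfacH : (Nat.card ↥H).factorization p = n := by
    refine le_antisymm ?_ ?_
    · exact (Nat.factorization_le_iff_dvd hHne Nat.card_pos.ne' |>.mpr H.card_subgroup_dvd_card) p
    · exact (Nat.Prime.pow_dvd_iff_le_factorization hp hHne).mp (hcardx ▸ hdvd)
  set K := Subgroup.normalizer (H : Set G) with hK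
  set H' := H.subgroupOf K with hH'
  haveI : H'.Normal := Subgroup.normal_in_normalizer
  have hcardH' : Nat.card ↥H' = Nat.card ↥H :=
    Nat.card_congr (Subgroup.subgroupOfEquivOfLe Subgroup.le_normalizer).toEquiv
  obtain ⟨Q⟩ : Nonempty (Sylow p ↥H') := inferInstance
  set R : Subgroup ↥K := (Q : Subgroup ↥H').map H'.subtype with hR
  set R' : Subgroup G := R.map K.subtype with hR'
  have hcardR' : Nat.card ↥R' = p ^ n := by
    have e1 : Nat.card ↥R = Nat.card ↥(Q : Subgroup ↥H') :=
      (Nat.card_congr (Subgroup.equivMapOfInjective _ _ H'.subtype_injective).toEquiv).symm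
    have e2 : Nat.card ↥R' = Nat.card ↥R :=
      (Nat.card_congr (Subgroup.equivMapOfInjective _ _ K.subtype_injective).toEquiv).symm
    rw [e2, e1, Q.card_eq_multiplicity, hcardH', hfacH]
  -- R' is a Sylow p-subgroup of G
  let Rsyl : Sylow p G := Sylow.ofCard R' hcardR'
  obtain ⟨g, hg⟩ := MulAction.exists_smul_eq G Px Rsyl
  have hRconj : R' = (Subgroup.zpowers x).map (MulAut.conj g).toMonoidHom := by
    have : ((g • Px : Sylow p G) : Subgroup G) = R' := by rw [hg]; rfl
    rw [← this, Sylow.smul_def, Sylow.pointwise_smul_def, Subgroup.pointwise_smul_def, hPx]; rfl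
  have hRself : Subgroup.normalizer (R' : Set G) = R' := by
    rw [hRconj, ← Subgroup.map_equiv_normalizer_eq, hself]
  have hR'H : R' ≤ H := by
    rw [hR', hR, Subgroup.map_map]
    calc ((Q : Subgroup ↥H').map (K.subtype.comp H'.subtype)) ≤ H'.map K.subtype :=
          by rw [← Subgroup.map_map]; exact Subgroup.map_mono (Subgroup.map_subtype_le _)
      _ = H ⊓ K := Subgroup.subgroupOf_map_subtype H K
      _ ≤ H := inf_le_left
  -- Frattini argument inside K
  have hfrat : Subgroup.normalizer (R : Set ↥K) ⊔ H' = ⊤ := Sylow.normalizer_sup_eq_top Q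
  apply le_antisymm _ Subgroup.le_normalizer
  intro k hk
  have hkK : (⟨k, hk⟩ : ↥K) ∈ Subgroup.normalizer (R : Set ↥K) ⊔ H' := hfrat ▸ Subgroup.mem_top _
  rw [← SetLike.mem_coe, Subgroup.mul_normal] at hkK
  obtain ⟨a, ha, b, hb, hab⟩ := hkK
  have haR' : (a : G) ∈ Subgroup.normalizer (R' : Set G) :=
    Subgroup.le_normalizer_map K.subtype ⟨a, ha, rfl⟩
  have haH : (a : G) ∈ H := hR'H (hRself ▸ haR')
  have hbH : (b : G) ∈ H := hb
  have : k = (a : G) * (b : G) := (congrArg Subtype.val hab).symm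
  rw [this]
  exact H.mul_mem haH hbH
end
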